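/- arXiv:2103.03971 — 5 statements merged into one kernel-verified Lean document; each statement's English description precedes it below -/
import Mathlib

section
/- Let φ : 2^{<ω} → 2^{<ω} be a computable monotone map such that |φ(X↾n)| → ∞ for every X ∈ 2^ω, and let Φ : 2^ω → 2^ω be the induced total map (Φ(X) is the unique sequence extending every φ(X↾n)). Assume Φ is nowhere constant: for every σ ∈ 2^{<ω} there exist X, Y ∈ ⟦σ⟧ with Φ(X) ≠ Φ(Y). Then the canonical generator ψ of Φ, defined by letting ψ(σ) be the longest common initial segment of {Φ(X) : X ∈ ⟦σ⟧} (a finite string, by nowhere constancy), is a computable function 2^{<ω} → 2^{<ω}. -/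
open Filter

/-- The length-`n` initial segment of `X ∈ 2^ω`, as a finite binary string. -/
def seg (X : ℕ → Bool) (n : ℕ) : List Bool := (List.range n).map X

/-- The cylinder `⟦σ⟧` of all sequences extending the string `σ`. -/
def cyl (σ : List Bool) : Set (ℕ → Bool) := {X | seg X σ.length = σ}

namespace Stmt3Aux



/-! ### seg basics -/

lemma seg_length (X : ℕ → Bool) (n : ℕ) : (seg X n).length = n := by simp [seg]

lemma seg_getElem (X : ℕ → Bool) {n i : ℕ} (h : i < n) :
    (seg X n)[i]'(by simpa [seg_length]) = X i := by
  simp [seg]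

lemma seg_getD (X : ℕ → Bool) {n i : ℕ} (h : i < n) :
    (seg X n).getD i false = X i := by
  rw [List.getD_eq_getElem _ _ (by simpa [seg_length])]
  exact seg_getElem X h

lemma seg_take (X : ℕ → Bool) {n m : ℕ} (h : n ≤ m) :
    (seg X m).take n = seg X n := by
  simp [seg, ← List.map_take, List.take_range, Nat.min_eq_left h]

lemma seg_succ (X : ℕ → Bool) (n : ℕ) : seg X (n + 1) = seg X n ++ [X n] := by
  simp [seg, List.range_succ]

lemma eq_getD_of_seg_eq {X : ℕ → Bool} {n i : ℕ} {l : List Bool}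
    (h : seg X n = l) (hi : i < n) : X i = l.getD i false := by
  subst h; exact (seg_getD X hi).symm

/-- the canonical extension of a finite string -/
def extend (l : List Bool) : ℕ → Bool := fun i => l.getD i false

lemma seg_extend (l : List Bool) : seg (extend l) l.length = l := by
  apply List.ext_getElem (by simp [seg_length])
  intro i h1 h2
  rw [seg_getElem _ (by simpa [seg_length] using h1)]
  simp [extend, List.getD_eq_getElem _ _ h2, List.getElem?_eq_getElem h2]

lemma extend_mem_cyl (σ τ : List Bool) : extend (σ ++ τ) ∈ cyl σ := by
  show seg _ _ = σ
  have h1 := seg_extend (σ ++ τ)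
  have h2 : σ.length ≤ (σ ++ τ).length := by simp
  calc seg (extend (σ ++ τ)) σ.length
      = (seg (extend (σ ++ τ)) (σ ++ τ).length).take σ.length := (seg_take _ h2).symm
    _ = (σ ++ τ).take σ.length := by rw [h1]
    _ = σ := List.take_left

lemma seg_extend_append (σ τ : List Bool) :
    seg (extend (σ ++ τ)) (σ.length + τ.length) = σ ++ τ := by
  have := seg_extend (σ ++ τ); rwa [List.length_append] at this


/-! ### the syntactic search function -/

def exts : ℕ → List (List Bool) :=
  fun n => n.rec [[]] fun _ IH => IH.flatMap fun l => [false :: l, true :: l]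

lemma mem_exts : ∀ {n : ℕ} {l : List Bool}, l ∈ exts n ↔ l.length = n := by
  intro n
  induction n with
  | zero => intro l; simp [exts, List.length_eq_zero_iff]
  | succ n ih =>
    intro l
    show l ∈ (exts n).flatMap _ ↔ _
    rw [List.mem_flatMap]
    constructor
    · rintro ⟨x, hx, hl⟩
      simp only [List.mem_cons, List.not_mem_nil, or_false] at hl
      rcases hl with rfl | rfl <;> simp [ih.1 hx]
    · intro hl
      match l, hl with
      | a :: l', hl =>
        refine ⟨l', ih.2 (by simpa using hl), ?_⟩
        cases a <;> simp
lemma exts_primrec : Primrec exts := by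
  have hstep : Primrec₂ fun (_ : ℕ) (p : ℕ × List (List Bool)) =>
      p.2.flatMap fun l => [false :: l, true :: l] := by
    have h1 : Primrec fun p : ℕ × (ℕ × List (List Bool)) => p.2.2 :=
      Primrec.snd.comp Primrec.snd
    exact (Primrec.list_flatMap h1
      ((Primrec.list_cons.comp
          (Primrec.list_cons.comp (Primrec.const false) Primrec.snd)
          (Primrec.list_cons.comp
            (Primrec.list_cons.comp (Primrec.const true) Primrec.snd)
            (Primrec.const []))).to₂)).to₂
  have := Primrec.nat_rec' (Primrec.id (α := ℕ)) (Primrec.const [[]]) hstep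
  exact this.of_eq fun n => rfl

def pairs (S : List (List Bool)) : List (List Bool × List Bool) :=
  S.flatMap fun u => S.map fun v => (u, v)

lemma mem_pairs {S : List (List Bool)} {u v : List Bool} :
    (u, v) ∈ pairs S ↔ u ∈ S ∧ v ∈ S := by
  simp [pairs, List.mem_flatMap, List.mem_map]

lemma pairs_primrec : Primrec pairs :=
  Primrec.list_flatMap Primrec.id
    ((Primrec.list_map Primrec.fst
      ((Primrec.snd.comp Primrec.fst).pair Primrec.snd).to₂).to₂)

def disB (k : ℕ) (p : List Bool × List Bool) : Bool :=
  decide (k < p.1.length) && (decide (k < p.2.length) &&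
    decide (p.1.getD k false ≠ p.2.getD k false))

lemma disB_iff {k : ℕ} {p : List Bool × List Bool} :
    disB k p = true ↔
      k < p.1.length ∧ k < p.2.length ∧ p.1.getD k false ≠ p.2.getD k false := by
  simp [disB]

lemma disB_primrec : Primrec₂ disB := by
  have hl1 : Primrec fun q : ℕ × (List Bool × List Bool) => decide (q.1 < q.2.1.length) :=
    Primrec.nat_lt.comp Primrec.fst (Primrec.list_length.comp (Primrec.fst.comp Primrec.snd)) |>.decide
  have hl2 : Primrec fun q : ℕ × (List Bool × List Bool) => decide (q.1 < q.2.2.length) :=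
    Primrec.nat_lt.comp Primrec.fst (Primrec.list_length.comp (Primrec.snd.comp Primrec.snd)) |>.decide
  have hgd1 : Primrec fun q : ℕ × (List Bool × List Bool) => q.2.1.getD q.1 false :=
    (Primrec.list_getD false).comp (Primrec.fst.comp Primrec.snd) Primrec.fst
  have hgd2 : Primrec fun q : ℕ × (List Bool × List Bool) => q.2.2.getD q.1 false :=
    (Primrec.list_getD false).comp (Primrec.snd.comp Primrec.snd) Primrec.fst
  have hne : Primrec fun q : ℕ × (List Bool × List Bool) =>
      decide (q.2.1.getD q.1 false ≠ q.2.2.getD q.1 false) :=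
    (Primrec.eq.comp hgd1 hgd2).not.decide
  exact (Primrec.and.comp hl1 (Primrec.and.comp hl2 hne)).to₂

def mOf (S : List (List Bool)) : ℕ :=
  (List.range S.flatten.length).findIdx fun k =>
    decide ((pairs S).findIdx (disB k) < (pairs S).length)

def G (S : List (List Bool)) : Option (List Bool) :=
  if mOf S < S.flatten.length ∧
      (S.findIdx fun u => decide (u.length < mOf S)) = S.length
  then some ((List.range (mOf S)).map fun i => S.headI.getD i false)
  else none

lemma mOf_primrec : Primrec mOf := by
  have hfl : Primrec fun S : List (List Bool) => S.flatten.length :=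
    Primrec.list_length.comp Primrec.list_flatten
  have hfi : Primrec fun q : List (List Bool) × ℕ => (pairs q.1).findIdx (disB q.2) :=
    Primrec.list_findIdx (pairs_primrec.comp Primrec.fst)
      ((disB_primrec.comp (Primrec.snd.comp Primrec.fst) Primrec.snd).to₂)
  have hpred : Primrec₂ fun (S : List (List Bool)) (k : ℕ) =>
      decide ((pairs S).findIdx (disB k) < (pairs S).length) :=
    (Primrec.nat_lt.comp hfi
      (Primrec.list_length.comp (pairs_primrec.comp Primrec.fst))).decide.to₂
  exact Primrec.list_findIdx (Primrec.list_range.comp hfl) hpred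

lemma G_primrec : Primrec G := by
  have hfl : Primrec fun S : List (List Bool) => S.flatten.length :=
    Primrec.list_length.comp Primrec.list_flatten
  have hcond1 : PrimrecPred fun S : List (List Bool) => mOf S < S.flatten.length :=
    Primrec.nat_lt.comp mOf_primrec hfl
  have hfi2 : Primrec fun S : List (List Bool) =>
      S.findIdx fun u => decide (u.length < mOf S) :=
    Primrec.list_findIdx Primrec.id
      ((Primrec.nat_lt.comp (Primrec.list_length.comp Primrec.snd)
        (mOf_primrec.comp Primrec.fst)).decide.to₂)
  have hcond2 : PrimrecPred fun S : List (List Bool) =>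
      (S.findIdx fun u => decide (u.length < mOf S)) = S.length :=
    Primrec.eq.comp hfi2 Primrec.list_length
  have hval : Primrec fun S : List (List Bool) =>
      (List.range (mOf S)).map fun i => S.headI.getD i false :=
    Primrec.list_map (Primrec.list_range.comp mOf_primrec)
      (((Primrec.list_getD false).comp (Primrec.list_headI.comp Primrec.fst)
        Primrec.snd).to₂)
  exact Primrec.ite (hcond1.and hcond2) (Primrec.option_some.comp hval) (Primrec.const none)


/-- map of a computable function over a computable list -/
lemma computable_list_map {α β γ : Type} [Primcodable α] [Primcodable β] [Primcodable γ]
    [Inhabited β] {f : α → β → γ} (hf : Computable₂ f) {g : α → List β}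
    (hg : Computable g) : Computable fun a => (g a).map (f a) := by
  have hgd : Computable fun q : α × (ℕ × List γ) => ((g q.1)[q.2.1]?).getD default :=
    Computable.option_getD
      (Computable.list_getElem?.comp (hg.comp Computable.fst)
        (Computable.fst.comp Computable.snd))
      (Computable.const default)
  have hstep : Computable₂ fun (a : α) (p : ℕ × List γ) =>
      p.2 ++ [f a (((g a)[p.1]?).getD default)] :=
    (Computable.list_append.comp (Computable.snd.comp Computable.snd)
      (Computable.list_cons.comp (hf.comp Computable.fst hgd)
        (Computable.const []))).to₂
  have h : Computable fun a =>
      Nat.rec (motive := fun _ => List γ) []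
        (fun k IH => IH ++ [f a (((g a)[k]?).getD default)]) ((g a).length) :=
    Computable.nat_rec (Computable.list_length.comp hg) (Computable.const []) hstep
  refine h.of_eq fun a => ?_
  have key : ∀ n, n ≤ (g a).length →
      (Nat.rec (motive := fun _ => List γ) []
        (fun k IH => IH ++ [f a (((g a)[k]?).getD default)]) n) =
      ((g a).take n).map (f a) := by
    intro n
    induction n with
    | zero => intro _; simp
    | succ n ih =>
      intro hn
      have hn' : n < (g a).length := hn
      have : (g a)[n]? = some ((g a)[n]'hn') := by
        simp [List.getElem?_eq_getElem hn']
      show (Nat.rec _ _ n : List γ) ++ _ = _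
      rw [ih (Nat.le_of_lt hn'), this]
      rw [List.take_succ, List.map_append]
      simp [List.getElem?_eq_getElem hn']
  rw [key (g a).length le_rfl, List.take_length]

def Sset (φ : List Bool → List Bool) (σ : List Bool) (n : ℕ) : List (List Bool) :=
  (exts n).map fun τ => φ (σ ++ τ)

lemma mem_Sset {φ : List Bool → List Bool} {σ : List Bool} {n : ℕ} {u : List Bool} :
    u ∈ Sset φ σ n ↔ ∃ τ : List Bool, τ.length = n ∧ u = φ (σ ++ τ) := by
  simp [Sset, List.mem_map, mem_exts, eq_comm]

lemma Sset_ne_nil (φ : List Bool → List Bool) (σ : List Bool) (n : ℕ) :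
    Sset φ σ n ≠ [] := by
  have : (List.replicate n false) ∈ exts n := mem_exts.2 (by simp)
  simp only [Sset, ne_eq, List.map_eq_nil_iff]
  exact fun h => by simp [h] at this

lemma headI_mem {α : Type} [Inhabited α] {l : List α} (h : l ≠ []) : l.headI ∈ l := by
  cases l with
  | nil => exact absurd rfl h
  | cons a l => simp

lemma mem_pairs' {S : List (List Bool)} {p : List Bool × List Bool} :
    p ∈ pairs S ↔ p.1 ∈ S ∧ p.2 ∈ S := by
  obtain ⟨u, v⟩ := p; exact mem_pairs

lemma len_le_flatten {S : List (List Bool)} {u : List Bool} (h : u ∈ S) :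
    u.length ≤ S.flatten.length := by
  rw [List.length_flatten]
  exact List.single_le_sum (fun x _ => Nat.zero_le x) _ (List.mem_map_of_mem h)

/-- key structural fact about `mOf`: minimality (all members agree below `mOf`) -/
lemma mOf_min {S : List (List Bool)} {k : ℕ} (hk : k < mOf S)
    {u w : List Bool} (hu : u ∈ S) (hw : w ∈ S)
    (hku : k < u.length) (hkw : k < w.length) :
    u.getD k false = w.getD k false := by
  by_contra hne
  have hkK : k < (List.range S.flatten.length).length := by
    have : mOf S ≤ (List.range S.flatten.length).length := List.findIdx_le_length
    omega
  have hfalse := List.not_of_lt_findIdx (p := fun k =>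
    decide ((pairs S).findIdx (disB k) < (pairs S).length)) (xs := List.range S.flatten.length)
    (i := k) hk
  rw [List.getElem_range] at hfalse
  have hex : (pairs S).findIdx (disB k) < (pairs S).length :=
    List.findIdx_lt_length_of_exists
      ⟨(u, w), mem_pairs.2 ⟨hu, hw⟩, disB_iff.2 ⟨hku, hkw, hne⟩⟩
  simp [hex] at hfalse

section Spec

variable {φ : List Bool → List Bool} {Φ : (ℕ → Bool) → (ℕ → Bool)}
variable (hΦ : ∀ (X : ℕ → Bool) (n : ℕ), seg (Φ X) (φ (seg X n)).length = φ (seg X n))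

include hΦ in
/-- values of `Φ X` are read off from `φ` on initial segments -/
lemma PhiPre (X : ℕ → Bool) (n j : ℕ) (hj : j < (φ (seg X n)).length) :
    Φ X j = (φ (seg X n)).getD j false :=
  eq_getD_of_seg_eq (hΦ X n) hj

lemma phi_seg_mem {σ : List Bool} {X : ℕ → Bool} (hX : X ∈ cyl σ) (n : ℕ) :
    φ (seg X (σ.length + n)) ∈ Sset φ σ n := by
  refine mem_Sset.2 ⟨(seg X (σ.length + n)).drop σ.length, ?_, ?_⟩
  · simp [seg_length]
  · congr 1
    have h1 : (seg X (σ.length + n)).take σ.length = σ := by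
      rw [seg_take X (Nat.le_add_right _ _)]; exact hX
    conv_lhs => rw [← List.take_append_drop σ.length (seg X (σ.length + n))]
    rw [h1]

include hΦ in
/-- Soundness: any output of the search equals `ψ σ`. -/
lemma G_sound {ψ : List Bool → List Bool}
    (hψcommon : ∀ σ : List Bool, ∀ X ∈ cyl σ, seg (Φ X) (ψ σ).length = ψ σ)
    (hψlongest : ∀ σ τ : List Bool,
      (∀ X ∈ cyl σ, seg (Φ X) τ.length = τ) → τ <+: ψ σ)
    {σ : List Bool} {n : ℕ} {v : List Bool}
    (h : G (Sset φ σ n) = some v) : v = ψ σ := by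
  set S := Sset φ σ n with hSdef
  set m := mOf S with hm
  rw [G] at h
  split_ifs at h with hc
  have hv : v = (List.range m).map fun i => S.headI.getD i false := (Option.some.inj h).symm
  have hvlen : v.length = m := by simp [hv]
  have hvget : ∀ i (hi : i < m), v.getD i false = S.headI.getD i false := by
    intro i hi
    rw [hv, List.getD_eq_getElem _ _ (by simpa using hi)]
    simp
  -- all members have length ≥ m
  have hlenm : ∀ u ∈ S, m ≤ u.length := by
    intro u hu
    have := List.findIdx_eq_length.1 hc.2 u hu
    simpa using this
  have hSne : S ≠ [] := Sset_ne_nil φ σ n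
  have hhead : S.headI ∈ S := headI_mem hSne
  -- a disagreeing pair at position m
  have hmK : m < (List.range S.flatten.length).length := by simpa using hc.1
  have hpredm : ((pairs S).findIdx
      (disB ((List.range S.flatten.length)[m]'hmK)) < (pairs S).length) := by
    have h0 := List.findIdx_getElem (w := hmK)
    rwa [decide_eq_true_eq] at h0
  rw [List.getElem_range] at hpredm
  set pp := (pairs S)[(pairs S).findIdx (disB m)]'hpredm with hppdef
  have hpp_mem : pp ∈ pairs S := List.getElem_mem _
  have hpp_dis : disB m pp = true := List.findIdx_getElem (w := hpredm)
  rw [disB_iff] at hpp_dis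
  obtain ⟨hl1, hl2, hne⟩ := hpp_dis
  obtain ⟨h1S, h2S⟩ := mem_pairs'.1 hpp_mem
  -- Step 1 : v is a common initial segment of Φ on cyl σ
  have hcomm : ∀ X ∈ cyl σ, seg (Φ X) v.length = v := by
    intro X hX
    rw [hvlen]
    apply List.ext_getElem (by simp [seg_length, hvlen])
    intro i hi1 hi2
    have him : i < m := by simpa [seg_length] using hi1
    have huX : φ (seg X (σ.length + n)) ∈ S := phi_seg_mem hX n
    have hluX : m ≤ (φ (seg X (σ.length + n))).length := hlenm _ huX
    rw [seg_getElem _ him]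
    have e1 : Φ X i = (φ (seg X (σ.length + n))).getD i false :=
      PhiPre hΦ X _ i (lt_of_lt_of_le him hluX)
    have e2 : (φ (seg X (σ.length + n))).getD i false = S.headI.getD i false :=
      mOf_min him huX hhead (lt_of_lt_of_le him hluX)
        (lt_of_lt_of_le him (hlenm _ hhead))
    rw [e1, e2, ← hvget i him]
    exact List.getD_eq_getElem _ _ hi2
  have hpre : v <+: ψ σ := hψlongest σ v hcomm
  -- Step 2 : (ψ σ).length ≤ m
  have hlen2 : (ψ σ).length ≤ m := by
    by_contra hlt
    push_neg at hlt
    obtain ⟨τ₁, hτ₁len, hτ₁⟩ := mem_Sset.1 h1S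
    obtain ⟨τ₂, hτ₂len, hτ₂⟩ := mem_Sset.1 h2S
    have hX₁ : extend (σ ++ τ₁) ∈ cyl σ := extend_mem_cyl σ τ₁
    have hX₂ : extend (σ ++ τ₂) ∈ cyl σ := extend_mem_cyl σ τ₂
    have hs₁ : seg (extend (σ ++ τ₁)) (σ.length + n) = σ ++ τ₁ := by
      rw [← hτ₁len]; exact seg_extend_append σ τ₁
    have hs₂ : seg (extend (σ ++ τ₂)) (σ.length + n) = σ ++ τ₂ := by
      rw [← hτ₂len]; exact seg_extend_append σ τ₂
    have e1 : Φ (extend (σ ++ τ₁)) m = pp.1.getD m false := by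
      have := PhiPre hΦ (extend (σ ++ τ₁)) (σ.length + n) m
        (by rw [hs₁, ← hτ₁]; exact hl1)
      rwa [hs₁, ← hτ₁] at this
    have e2 : Φ (extend (σ ++ τ₂)) m = pp.2.getD m false := by
      have := PhiPre hΦ (extend (σ ++ τ₂)) (σ.length + n) m
        (by rw [hs₂, ← hτ₂]; exact hl2)
      rwa [hs₂, ← hτ₂] at this
    have f1 : Φ (extend (σ ++ τ₁)) m = (ψ σ).getD m false :=
      eq_getD_of_seg_eq (hψcommon σ _ hX₁) hlt
    have f2 : Φ (extend (σ ++ τ₂)) m = (ψ σ).getD m false :=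
      eq_getD_of_seg_eq (hψcommon σ _ hX₂) hlt
    exact hne (by rw [← e1, ← e2, f1, f2])
  exact hpre.eq_of_length_le (by omega)

end Spec

section Complete

variable {φ : List Bool → List Bool}
  (hmono : ∀ σ τ : List Bool, σ <+: τ → φ σ <+: φ τ)
  (hlim : ∀ X : ℕ → Bool, Tendsto (fun n => (φ (seg X n)).length) atTop atTop)

include hmono hlim in
lemma compactness (σ : List Bool) (m₀ : ℕ) :
    ∃ n : ℕ, ∀ τ : List Bool, τ.length = n → m₀ < (φ (σ ++ τ)).length := by
  by_contra hno
  push_neg at hno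
  set P : List Bool → Prop := fun l =>
    ∀ k, ∃ τ, τ.length = l.length + k ∧ l <+: τ ∧ (φ (σ ++ τ)).length ≤ m₀ with hP
  have hclose : ∀ {τ' τ : List Bool}, τ' <+: τ → (φ (σ ++ τ)).length ≤ m₀ →
      (φ (σ ++ τ')).length ≤ m₀ := by
    rintro τ' τ ⟨r, rfl⟩ hτ
    exact le_trans (hmono (σ ++ τ') (σ ++ (τ' ++ r)) ⟨r, by simp⟩).length_le hτ
  have hP0 : P [] := by
    intro k
    obtain ⟨τ, h1, h2⟩ := hno k
    exact ⟨τ, by simpa using h1, List.nil_prefix, h2⟩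
  have hstep : ∀ l, P l → ∃ b, P (l ++ [b]) := by
    intro l hPl
    by_contra hnb
    push_neg at hnb
    have hnb' : ∀ b : Bool, ∃ k, ∀ τ, τ.length = l.length + 1 + k →
        (l ++ [b]) <+: τ → m₀ < (φ (σ ++ τ)).length := by
      intro b
      have hb := hnb b
      simp only [hP] at hb
      rw [Classical.not_forall] at hb
      obtain ⟨k, hk⟩ := hb
      push_neg at hk
      refine ⟨k, fun τ h1 h2 => hk τ (by simpa [Nat.add_assoc] using h1) h2⟩
    obtain ⟨kf, hkf⟩ := hnb' false
    obtain ⟨kt, hkt⟩ := hnb' true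
    set N := kf + kt + 1 with hN
    obtain ⟨τ, hτlen, hτpre, hτfail⟩ := hPl N
    have hlt : l.length < τ.length := by omega
    set b := τ[l.length]'hlt with hb
    have htake : τ.take (l.length + 1) = l ++ [b] := by
      have h1 : l = τ.take l.length := List.prefix_iff_eq_take.1 hτpre
      rw [List.take_succ, List.getElem?_eq_getElem hlt]
      simp [← h1]
      exact hb.symm
    have hfinish : ∀ (k : ℕ), k + 1 ≤ N →
        (∀ τ', τ'.length = l.length + 1 + k → (l ++ [b]) <+: τ' →
          m₀ < (φ (σ ++ τ')).length) → False := by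
      intro k hkN hgood
      have hlen' : (τ.take (l.length + 1 + k)).length = l.length + 1 + k := by
        rw [List.length_take]; omega
      have hpre' : (l ++ [b]) <+: τ.take (l.length + 1 + k) := by
        rw [← htake]
        have h2 := List.take_prefix (l.length + 1) (τ.take (l.length + 1 + k))
        rwa [List.take_take, min_eq_left (by omega)] at h2
      have hfail' : (φ (σ ++ τ.take (l.length + 1 + k))).length ≤ m₀ :=
        hclose (List.take_prefix _ _) hτfail
      exact absurd (hgood _ hlen' hpre') (by omega)
    rcases Bool.eq_false_or_eq_true b with hbv | hbv
    · rw [hbv] at hfinish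
      first
      | exact hfinish kf (by omega) hkf
      | exact hfinish kt (by omega) hkt
    · rw [hbv] at hfinish
      first
      | exact hfinish kf (by omega) hkf
      | exact hfinish kt (by omega) hkt
  classical
  set g : List Bool → List Bool := fun l =>
    if h : ∃ b, P (l ++ [b]) then l ++ [Classical.choose h] else l with hg
  have hgP : ∀ l, P l → P (g l) ∧ ∃ b : Bool, g l = l ++ [b] := by
    intro l hl
    have hex : ∃ b, P (l ++ [b]) := hstep l hl
    have hgl : g l = l ++ [Classical.choose hex] := by
      simp only [hg]
      rw [dif_pos hex]
    exact ⟨by rw [hgl]; exact Classical.choose_spec hex, _, hgl⟩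
  have hLk : ∀ k, P (g^[k] []) ∧ (g^[k] []).length = k := by
    intro k
    induction k with
    | zero => exact ⟨hP0, rfl⟩
    | succ k ih =>
      rw [Function.iterate_succ_apply']
      obtain ⟨hPg, b, hb⟩ := hgP _ ih.1
      exact ⟨hPg, by rw [hb]; simp [ih.2]⟩
  have hLsucc : ∀ k, ∃ b : Bool, g^[k+1] [] = g^[k] [] ++ [b] := by
    intro k
    rw [Function.iterate_succ_apply']
    exact (hgP _ (hLk k).1).2
  set X : ℕ → Bool := fun i => (g^[i+1] []).getD i false with hX
  have hsegX : ∀ k, seg X k = g^[k] [] := by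
    intro k
    induction k with
    | zero => simp [seg]
    | succ k ih =>
      obtain ⟨b, hb2⟩ := hLsucc k
      rw [seg_succ, ih, hb2]
      congr 1
      have hXk : X k = b := by
        rw [hX]
        simp only
        rw [hb2, List.getD_eq_getElem _ _ (by simp [(hLk k).2]),
          List.getElem_append_right (by simp [(hLk k).2])]
        simp [(hLk k).2]
      rw [hXk]
  have hfailX : ∀ k, (φ (σ ++ seg X k)).length ≤ m₀ := by
    intro k
    obtain ⟨τ, h1, h2, h3⟩ := (hLk k).1 0
    have hττ : g^[k] [] = τ :=
      h2.eq_of_length_le (by rw [h1, (hLk k).2]; omega)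
    rw [hsegX k, hττ]
    exact h3
  set Z : ℕ → Bool :=
    fun i => if i < σ.length then σ.getD i false else X (i - σ.length) with hZ
  have hsegZ : ∀ k, seg Z (σ.length + k) = σ ++ seg X k := by
    intro k
    apply List.ext_getElem (by simp [seg_length])
    intro i h1 h2
    rw [seg_getElem _ (by simpa [seg_length] using h1)]
    rw [hZ]
    simp only
    by_cases hi : i < σ.length
    · rw [if_pos hi, List.getElem_append_left hi, List.getD_eq_getElem _ _ hi]
    · have hik : i - σ.length < k := by
        simp only [List.length_append, seg_length] at h2
        omega
      rw [if_neg hi, List.getElem_append_right (le_of_not_gt hi),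
        seg_getElem _ hik]
  have hev := (hlim Z).eventually_ge_atTop (m₀ + 1)
  rw [eventually_atTop] at hev
  obtain ⟨N₀, hN₀⟩ := hev
  have hcontr := hN₀ (σ.length + N₀) (by omega)
  rw [hsegZ N₀] at hcontr
  have := hfailX N₀
  omega

variable {Φ : (ℕ → Bool) → (ℕ → Bool)}

include hmono hlim in
lemma G_complete
    (hΦ : ∀ (X : ℕ → Bool) (n : ℕ), seg (Φ X) (φ (seg X n)).length = φ (seg X n))
    (hnc : ∀ σ : List Bool, ∃ X ∈ cyl σ, ∃ Y ∈ cyl σ, Φ X ≠ Φ Y)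
    (σ : List Bool) :
    ∃ n v, G (Sset φ σ n) = some v := by
  obtain ⟨X, hX, Y, hY, hne⟩ := hnc σ
  obtain ⟨m₀, hm₀⟩ := Function.ne_iff.1 hne
  obtain ⟨n, hn⟩ := compactness hmono hlim σ m₀
  set S := Sset φ σ n with hS
  have hlenS : ∀ u ∈ S, m₀ < u.length := by
    intro u hu
    obtain ⟨τ, h1, h2⟩ := mem_Sset.1 hu
    rw [h2]
    exact hn τ h1
  have huX : φ (seg X (σ.length + n)) ∈ S := phi_seg_mem hX n
  have huY : φ (seg Y (σ.length + n)) ∈ S := phi_seg_mem hY n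
  have hdis : disB m₀ (φ (seg X (σ.length + n)), φ (seg Y (σ.length + n))) = true := by
    rw [disB_iff]
    refine ⟨hlenS _ huX, hlenS _ huY, ?_⟩
    have e1 : Φ X m₀ = (φ (seg X (σ.length + n))).getD m₀ false :=
      PhiPre hΦ X _ m₀ (hlenS _ huX)
    have e2 : Φ Y m₀ = (φ (seg Y (σ.length + n))).getD m₀ false :=
      PhiPre hΦ Y _ m₀ (hlenS _ huY)
    simp only
    rw [← e1, ← e2]
    exact hm₀
  have hfi : (pairs S).findIdx (disB m₀) < (pairs S).length :=
    List.findIdx_lt_length_of_exists ⟨_, mem_pairs.2 ⟨huX, huY⟩, hdis⟩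
  have hm₀K : m₀ < S.flatten.length :=
    lt_of_lt_of_le (hlenS _ huX) (len_le_flatten huX)
  have hc1 : mOf S < S.flatten.length := by
    have h0 : mOf S < (List.range S.flatten.length).length :=
      List.findIdx_lt_length_of_exists
        ⟨m₀, List.mem_range.2 hm₀K, by simpa using hfi⟩
    simpa using h0
  have hmm₀ : mOf S ≤ m₀ := by
    by_contra hlt
    push_neg at hlt
    have hfalse := List.not_of_lt_findIdx (p := fun k =>
        decide ((pairs S).findIdx (disB k) < (pairs S).length))
      (xs := List.range S.flatten.length) (i := m₀) hlt
    rw [List.getElem_range] at hfalse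
    simp [hfi] at hfalse
  have hc2 : (S.findIdx fun u => decide (u.length < mOf S)) = S.length := by
    apply List.findIdx_eq_length.2
    intro u hu
    simp only [decide_eq_false_iff_not, not_lt]
    exact le_trans hmm₀ (le_of_lt (hlenS _ hu))
  refine ⟨n, (List.range (mOf S)).map fun i => S.headI.getD i false, ?_⟩
  show G S = _
  unfold G
  rw [if_pos ⟨hc1, hc2⟩]

end Complete

end Stmt3Aux

open Stmt3Aux in
/-- If `Φ` is the total functional induced by a computable monotone `φ` (with
`|φ(X↾n)| → ∞` for all `X`), and `Φ` is nowhere constant, then the canonical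
generator `ψ` of `Φ` (`ψ σ` is the longest common initial segment of
`{Φ X : X ∈ ⟦σ⟧}`) is computable. -/
theorem stmt3 (φ : List Bool → List Bool) (hφ : Computable φ)
    (hmono : ∀ σ τ : List Bool, σ <+: τ → φ σ <+: φ τ)
    (hlim : ∀ X : ℕ → Bool,
      Tendsto (fun n => (φ (seg X n)).length) atTop atTop)
    (Φ : (ℕ → Bool) → (ℕ → Bool))
    (hΦ : ∀ (X : ℕ → Bool) (n : ℕ), seg (Φ X) (φ (seg X n)).length = φ (seg X n))
    (hnc : ∀ σ : List Bool, ∃ X ∈ cyl σ, ∃ Y ∈ cyl σ, Φ X ≠ Φ Y)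
    (ψ : List Bool → List Bool)
    (hψcommon : ∀ σ : List Bool, ∀ X ∈ cyl σ, seg (Φ X) (ψ σ).length = ψ σ)
    (hψlongest : ∀ σ τ : List Bool,
      (∀ X ∈ cyl σ, seg (Φ X) τ.length = τ) → τ <+: ψ σ) :
    Computable ψ := by
  -- the search function
  have hg2 : Computable fun p : List Bool × ℕ => exts p.2 :=
    exts_primrec.to_comp.comp Computable.snd
  have hf2 : Computable₂ fun (p : List Bool × ℕ) (τ : List Bool) => φ (p.1 ++ τ) :=
    (hφ.comp (Computable.list_append.comp
      (Computable.fst.comp Computable.fst) Computable.snd)).to₂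
  have hSc : Computable fun p : List Bool × ℕ => Sset φ p.1 p.2 :=
    computable_list_map hf2 hg2
  have hF : Computable₂ fun (σ : List Bool) (n : ℕ) => G (Sset φ σ n) :=
    (G_primrec.to_comp.comp hSc).to₂
  have hpart : Partrec fun σ : List Bool =>
      Nat.rfindOpt fun n => G (Sset φ σ n) := Partrec.rfindOpt hF
  apply hpart.of_eq_tot
  intro σ
  have hdom : (Nat.rfindOpt fun n => G (Sset φ σ n)).Dom := by
    rw [Nat.rfindOpt_dom]
    obtain ⟨n, v, h⟩ := G_complete hmono hlim hΦ hnc σ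
    exact ⟨n, v, Option.mem_def.2 h⟩
  have hget := Part.get_mem hdom
  obtain ⟨n, hn⟩ := Nat.rfindOpt_spec hget
  have : (Nat.rfindOpt fun n => G (Sset φ σ n)).get hdom = ψ σ :=
    G_sound hΦ hψcommon hψlongest (Option.mem_def.1 hn)
  rw [← this]
  exact hget
end

section
/- Let φ : 2^{<ω} → 2^{<ω} be a computable monotone map and let Φ be the induced partial map on 2^ω, where Φ(X) is the (possibly finite) union of the strings φ(X↾n). Assume Φ is nowhere constant: for every σ ∈ 2^{<ω}, either Φ(X) is a finite string for some X ∈ ⟦σ⟧, or there exist X, Y ∈ ⟦σ⟧ with Φ(X) ≠ Φ(Y); then ψ(σ) := the longest common initial segment of {Φ(X) : X ∈ ⟦σ⟧} is a well-defined map ψ : 2^{<ω} → 2^{<ω} (the canonical generator of Φ). The graph {(σ, τ) : ψ(σ) = τ} is the set-difference A \ B of two computably enumerable subsets A, B of 2^{<ω} × 2^{<ω}. -/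
open Filter

def outPrefixes (φ : List Bool → List Bool) (X : ℕ → Bool) : Set (List Bool) :=
  {τ | ∃ n, τ <+: φ (seg X n)}

def CE {α : Type} [Primcodable α] (S : Set α) : Prop :=
  ∃ R : α × ℕ → Bool, Computable R ∧ S = {x | ∃ n, R (x, n) = true}

section aux

variable {α β σ : Type} [Primcodable α] [Primcodable β] [Primcodable σ]

/-- Computable closure under `List.map`. -/
theorem myListMap {f : α → List β} {g : α → β → σ} (hf : Computable f)
    (hg : Computable₂ g) : Computable fun a => (f a).map (g a) := by
  have hstep : Computable₂ (fun a (p : ℕ × List σ) =>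
      Option.casesOn ((f a)[p.1]?) p.2 (fun b => p.2 ++ [g a b]) : α → ℕ × List σ → List σ) := by
    apply Computable.option_casesOn
      (Computable.list_getElem?.comp (hf.comp Computable.fst) (Computable.fst.comp Computable.snd))
      (Computable.snd.comp Computable.snd)
    exact Computable₂.mk <| Computable.list_concat.comp
      (Computable.snd.comp (Computable.snd.comp Computable.fst))
      (hg.comp (Computable.fst.comp Computable.fst) Computable.snd)
  have h := Computable.nat_rec (Computable.list_length.comp hf) (Computable.const ([] : List σ))
    hstep
  refine h.of_eq fun a => ?_
  have key : ∀ n : ℕ, (Nat.rec ([] : List σ)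
      (fun y IH => Option.casesOn ((f a)[y]?) IH (fun b => IH ++ [g a b])) n)
      = ((f a).take n).map (g a) := by
    intro n
    induction n with
    | zero => simp
    | succ n ih =>
      rw [List.take_succ, List.map_append]
      rcases h' : (f a)[n]? with _ | b <;>
        simp [h', ih, ← List.map_take]
  rw [key]
  simp

/-- Computable closure under `List.take`. -/
theorem myListTake {f : α → List β} {g : α → ℕ} (hf : Computable f) (hg : Computable g) :
    Computable fun a => (f a).take (g a) := by
  have hstep : Computable₂ (fun a (p : ℕ × List β) =>
      Option.casesOn ((f a)[p.1]?) p.2 (fun b => p.2 ++ [b]) : α → ℕ × List β → List β) := by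
    apply Computable.option_casesOn
      (Computable.list_getElem?.comp (hf.comp Computable.fst) (Computable.fst.comp Computable.snd))
      (Computable.snd.comp Computable.snd)
    exact Computable₂.mk <| Computable.list_concat.comp
      (Computable.snd.comp (Computable.snd.comp Computable.fst)) Computable.snd
  have h := Computable.nat_rec hg (Computable.const ([] : List β)) hstep
  refine h.of_eq fun a => ?_
  generalize g a = n
  induction n with
  | zero => simp
  | succ n ih =>
    rw [List.take_succ]
    simp only [ih]
    rcases h' : (f a)[n]? with _ | b <;>
      simp [h', ih]

end aux

/-- All binary strings of length `n`. -/
def allStrings : ℕ → List (List Bool)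
  | 0 => [[]]
  | n + 1 => (allStrings n).map (false :: ·) ++ (allStrings n).map (true :: ·)

theorem length_of_mem_allStrings : ∀ n, ∀ l ∈ allStrings n, l.length = n := by
  intro n
  induction n with
  | zero => intro l hl; simp [allStrings] at hl; simp [hl]
  | succ n ih =>
    intro l hl
    simp only [allStrings, List.mem_append, List.mem_map] at hl
    rcases hl with ⟨l', hl', rfl⟩ | ⟨l', hl', rfl⟩ <;> simp [ih l' hl']

theorem mem_allStrings : ∀ l : List Bool, l ∈ allStrings l.length := by
  intro l
  induction l with
  | nil => simp [allStrings]
  | cons b l ih =>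
    simp only [List.length_cons, allStrings, List.mem_append, List.mem_map]
    cases b
    · exact Or.inl ⟨l, ih, rfl⟩
    · exact Or.inr ⟨l, ih, rfl⟩

theorem computable_allStrings : Computable allStrings := by
  have hstep : Computable₂ (fun (_ : ℕ) (p : ℕ × List (List Bool)) =>
      p.2.map (false :: ·) ++ p.2.map (true :: ·)) := by
    have h1 : Computable fun (x : ℕ × (ℕ × List (List Bool))) => x.2.2.map (false :: ·) :=
      myListMap (Computable.snd.comp Computable.snd)
        (Computable.list_cons.comp (Computable.const false) Computable.snd)
    have h2 : Computable fun (x : ℕ × (ℕ × List (List Bool))) => x.2.2.map (true :: ·) :=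
      myListMap (Computable.snd.comp Computable.snd)
        (Computable.list_cons.comp (Computable.const true) Computable.snd)
    exact Computable.list_append.comp h1 h2
  have h := Computable.nat_rec Computable.id (Computable.const ([[]] : List (List Bool))) hstep
  refine h.of_eq fun n => ?_
  induction n with
  | zero => rfl
  | succ n ih =>
    show _ = allStrings (n+1)
    rw [allStrings, ← ih]
    rfl

/-- conjunction of a list of booleans -/
def allb (L : List Bool) : Bool := L.foldr (· && ·) true

theorem allb_eq_true {L : List Bool} : allb L = true ↔ ∀ b ∈ L, b = true := by
  induction L with
  | nil => simp [allb]
  | cons b L ih => simp [allb, List.foldr_cons] at *; intro _; exact ih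

theorem computable_allb : Computable allb := by
  have := Primrec.list_foldr (Primrec.id (α := List Bool)) (Primrec.const true)
    ((Primrec.dom_bool₂ (· && ·)).comp (Primrec.fst.comp Primrec.snd)
      (Primrec.snd.comp Primrec.snd)).to₂
  exact this.to_comp

theorem seg_length (X : ℕ → Bool) (n : ℕ) : (seg X n).length = n := by simp [seg]

theorem seg_prefix (X : ℕ → Bool) {n m : ℕ} (h : n ≤ m) : seg X n <+: seg X m := by
  have : seg X n = (seg X m).take n := by
    simp [seg, ← List.map_take, List.take_range, Nat.min_eq_left h]
  rw [this]; exact List.take_prefix _ _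

theorem seg_add (X : ℕ → Bool) (a b : ℕ) :
    seg X (a + b) = seg X a ++ (List.range b).map (fun i => X (a + i)) := by
  simp [seg, List.range_add, Function.comp]

theorem seg_getD (l : List Bool) : seg (fun i => l.getD i false) l.length = l := by
  apply List.ext_getElem
  · simp [seg]
  · intro i h1 h2
    simp only [seg] at h1 ⊢
    simp only [List.getElem_map, List.getElem_range]
    exact List.getD_eq_getElem l false h2

/-- For the partial functional `Φ` induced by a computable monotone `φ`, assumed
nowhere constant (on each cylinder `⟦σ⟧`, either `Φ` is undefined—i.e. has finite
output—for some `X`, or `Φ` takes two different values), the graph of the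
canonical generator `ψ` (`ψ σ` = longest common initial segment of
`{Φ X : X ∈ ⟦σ⟧}`) is a difference of two c.e. sets. -/
theorem stmt4 (φ : List Bool → List Bool) (hφ : Computable φ)
    (hmono : ∀ σ τ : List Bool, σ <+: τ → φ σ <+: φ τ)
    (hnc : ∀ σ : List Bool,
      (∃ X ∈ cyl σ, ¬ Tendsto (fun n => (φ (seg X n)).length) atTop atTop) ∨
      (∃ X ∈ cyl σ, ∃ Y ∈ cyl σ, outPrefixes φ X ≠ outPrefixes φ Y))
    (ψ : List Bool → List Bool)
    (hψcommon : ∀ σ : List Bool, ∀ X ∈ cyl σ, ψ σ ∈ outPrefixes φ X)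
    (hψlongest : ∀ σ τ : List Bool,
      (∀ X ∈ cyl σ, τ ∈ outPrefixes φ X) → τ <+: ψ σ) :
    ∃ A B : Set (List Bool × List Bool), CE A ∧ CE B ∧
      {p : List Bool × List Bool | ψ p.1 = p.2} = A \ B := by
  classical
  -- the c.e. witness for A
  set R : (List Bool × List Bool) × ℕ → Bool := fun x =>
    allb ((allStrings x.2).map (fun ρ => decide ((φ (x.1.1 ++ ρ)).take x.1.2.length = x.1.2)))
    with hR
  -- computability of R
  have hRcomp : Computable R := by
    apply computable_allb.comp
    apply myListMap (computable_allStrings.comp Computable.snd)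
    apply Computable₂.mk
    have heq : Computable₂ (fun (a b : List Bool) => decide (a = b)) := Primrec.eq.decide.to_comp
    apply heq.comp
    · exact myListTake
        (hφ.comp (Computable.list_append.comp
          (Computable.fst.comp (Computable.fst.comp Computable.fst)) Computable.snd))
        (Computable.list_length.comp
          (Computable.snd.comp (Computable.fst.comp Computable.fst)))
    · exact Computable.snd.comp (Computable.fst.comp Computable.fst)
  -- semantics of R
  have hRsem : ∀ σ τ : List Bool,
      (∃ n, R ((σ, τ), n) = true) ↔ ∀ X ∈ cyl σ, τ ∈ outPrefixes φ X := by
    intro σ τ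
    constructor
    · rintro ⟨n, hn⟩ X hX
      rw [hR] at hn
      simp only [allb_eq_true, List.mem_map] at hn
      set ρ := (List.range n).map (fun i => X (σ.length + i)) with hρ
      have hρmem : ρ ∈ allStrings n := by
        have : ρ.length = n := by simp [hρ]
        rw [← this]; exact mem_allStrings ρ
      have := hn _ ⟨ρ, hρmem, rfl⟩
      rw [decide_eq_true_iff] at this
      have hpref : τ <+: φ (σ ++ ρ) := by
        rw [List.prefix_iff_eq_take]; exact this.symm
      refine ⟨σ.length + n, ?_⟩
      rwa [seg_add, hX]
    · intro hall
      -- compactness argument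
      set U : ℕ → Set (ℕ → Bool) := fun n => {X | τ <+: φ (seg X n)} with hU
      have hUmono : ∀ {n m}, n ≤ m → U n ⊆ U m := by
        intro n m hnm X hXn
        exact hXn.trans (hmono _ _ (seg_prefix X hnm))
      have hsetofeq : ∀ (n : ℕ) (l : List Bool), l.length = n →
          {X : ℕ → Bool | seg X n = l} = ⋂ i : Fin n, {X : ℕ → Bool | X i = l.getD i false} := by
        intro n l hn
        ext X
        simp only [Set.mem_setOf_eq, Set.mem_iInter]
        constructor
        · intro h i
          have h2 : (i : ℕ) < l.length := by rw [hn]; exact i.2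
          have := congrArg (fun t => t.getD (i : ℕ) false) h
          simp only [seg] at this
          rw [List.getD_eq_getElem _ false (by simpa using i.2), List.getD_eq_getElem _ false h2]
            at this
          rw [List.getD_eq_getElem _ false h2]
          simpa using this
        · intro h
          apply List.ext_getElem (by simp [seg, hn])
          intro i h1 h2
          simp only [seg, List.getElem_map, List.getElem_range]
          have := h ⟨i, by simpa [seg] using h1⟩
          rw [List.getD_eq_getElem _ false h2] at this
          exact this
      have hopenpt : ∀ (i : ℕ) (c : Bool), IsOpen {X : ℕ → Bool | X i = c} := by
        intro i c
        have : {X : ℕ → Bool | X i = c} = (fun X : ℕ → Bool => X i) ⁻¹' {c} := by ext X; simp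
        rw [this]
        exact IsOpen.preimage (continuous_apply i) (isOpen_discrete _)
      have hclosedpt : ∀ (i : ℕ) (c : Bool), IsClosed {X : ℕ → Bool | X i = c} := by
        intro i c
        have : {X : ℕ → Bool | X i = c} = (fun X : ℕ → Bool => X i) ⁻¹' {c} := by ext X; simp
        rw [this]
        exact IsClosed.preimage (continuous_apply i) (isClosed_discrete _)
      have hUopen : ∀ n, IsOpen (U n) := by
        intro n
        have : U n = ⋃ (l : List Bool) (_ : τ <+: φ l ∧ l.length = n), {X | seg X n = l} := by
          ext X
          simp only [hU, Set.mem_setOf_eq, Set.mem_iUnion]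
          constructor
          · intro h; exact ⟨seg X n, ⟨h, seg_length X n⟩, rfl⟩
          · rintro ⟨l, ⟨h1, _⟩, h2⟩; rw [h2]; exact h1
        rw [this]
        apply isOpen_iUnion; intro l; apply isOpen_iUnion; rintro ⟨-, hlen⟩
        rw [hsetofeq n l hlen]
        exact isOpen_iInter_of_finite fun i => hopenpt i _
      have hclosed : IsClosed (cyl σ) := by
        have : cyl σ = ⋂ i : Fin σ.length, {X : ℕ → Bool | X i = σ.getD i false} :=
          hsetofeq σ.length σ rfl
        rw [this]
        exact isClosed_iInter fun i => hclosedpt i _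
      have hcompact : IsCompact (cyl σ) := hclosed.isCompact
      have hcover : cyl σ ⊆ ⋃ n, U n := by
        intro X hX
        obtain ⟨n, hn⟩ := hall X hX
        exact Set.mem_iUnion.2 ⟨n, hn⟩
      obtain ⟨t, ht⟩ := hcompact.elim_finite_subcover U hUopen hcover
      set N := t.sup id with hN
      have hUN : cyl σ ⊆ U N := by
        intro X hX
        obtain ⟨n, hn, hXn⟩ := Set.mem_iUnion₂.1 (ht hX)
        exact hUmono (Finset.le_sup (f := id) hn) hXn
      refine ⟨N, ?_⟩
      rw [hR]
      rw [allb_eq_true]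
      simp only [List.mem_map]
      rintro b ⟨ρ, hρ, rfl⟩
      rw [decide_eq_true_iff]
      have hρlen : ρ.length = N := length_of_mem_allStrings N ρ hρ
      set X : ℕ → Bool := fun i => (σ ++ ρ).getD i false with hXdef
      have hseg : seg X (σ.length + N) = σ ++ ρ := by
        have : (σ ++ ρ).length = σ.length + N := by simp [hρlen]
        rw [← this]; exact seg_getD (σ ++ ρ)
      have hXcyl : X ∈ cyl σ := by
        show seg X σ.length = σ
        have h1 : seg X σ.length <+: seg X (σ.length + N) := seg_prefix X (Nat.le_add_right _ _)
        rw [hseg] at h1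
        have h2 : (seg X σ.length).length = σ.length := seg_length X σ.length
        have h3 := List.prefix_iff_eq_take.1 h1
        rw [h2, List.take_left] at h3
        exact h3
      have hτ : τ <+: φ (seg X N) := hUN hXcyl
      have : τ <+: φ (σ ++ ρ) := by
        refine hτ.trans (hmono _ _ ?_)
        rw [← hseg]; exact seg_prefix X (Nat.le_add_left _ _)
      exact (List.prefix_iff_eq_take.1 this).symm
  -- the sets A and B
  refine ⟨{p | ∀ X ∈ cyl p.1, p.2 ∈ outPrefixes φ X},
    {p | ∃ b : Bool, ∀ X ∈ cyl p.1, p.2 ++ [b] ∈ outPrefixes φ X}, ?_, ?_, ?_⟩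
  · refine ⟨R, hRcomp, ?_⟩
    ext p
    simp only [Set.mem_setOf_eq]
    exact (hRsem p.1 p.2).symm
  · -- B is c.e.
    set R' : (List Bool × List Bool) × ℕ → Bool := fun x =>
      R ((x.1.1, x.1.2 ++ [false]), x.2) || R ((x.1.1, x.1.2 ++ [true]), x.2) with hR'
    have hc : ∀ b : Bool,
        Computable fun x : (List Bool × List Bool) × ℕ => R ((x.1.1, x.1.2 ++ [b]), x.2) := by
      intro b
      exact hRcomp.comp (Computable.pair
        (Computable.pair (Computable.fst.comp Computable.fst)
          (Computable.list_concat.comp (Computable.snd.comp Computable.fst)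
            (Computable.const b))) Computable.snd)
    refine ⟨R', ((Primrec.dom_bool₂ (· || ·)).to_comp.comp (hc false) (hc true) : _), ?_⟩
    ext p
    simp only [Set.mem_setOf_eq, hR', Bool.or_eq_true]
    constructor
    · rintro ⟨b, hb⟩
      obtain ⟨n, hn⟩ := (hRsem p.1 (p.2 ++ [b])).2 hb
      cases b
      · exact ⟨n, Or.inl hn⟩
      · exact ⟨n, Or.inr hn⟩
    · rintro ⟨n, hn | hn⟩
      · exact ⟨false, (hRsem p.1 (p.2 ++ [false])).1 ⟨n, hn⟩⟩
      · exact ⟨true, (hRsem p.1 (p.2 ++ [true])).1 ⟨n, hn⟩⟩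
  · -- graph of ψ = A \ B
    ext ⟨σ, τ⟩
    simp only [Set.mem_setOf_eq, Set.mem_diff]
    constructor
    · rintro rfl
      refine ⟨fun X hX => hψcommon σ X hX, ?_⟩
      rintro ⟨b, hb⟩
      have h1 : ψ σ ++ [b] <+: ψ σ := hψlongest σ (ψ σ ++ [b]) hb
      have := h1.length_le
      simp at this
    · rintro ⟨hA, hB⟩
      have hτψ : τ <+: ψ σ := hψlongest σ τ hA
      by_contra hne
      have hlt : τ.length < (ψ σ).length := by
        rcases Nat.lt_or_ge τ.length (ψ σ).length with h | h
        · exact h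
        · exact absurd (hτψ.eq_of_length (le_antisymm hτψ.length_le h)).symm hne
      set b := (ψ σ).get ⟨τ.length, hlt⟩ with hb
      have hτb : τ ++ [b] <+: ψ σ := by
        have h1 : τ = (ψ σ).take τ.length := List.prefix_iff_eq_take.1 hτψ
        have h2 : τ ++ [b] = (ψ σ).take (τ.length + 1) := by
          rw [List.take_succ, ← h1]
          congr 1
          have : (ψ σ)[τ.length]? = some b := by
            rw [List.getElem?_eq_getElem hlt]; rfl
          rw [this]; rfl
        rw [h2]; exact List.take_prefix _ _
      apply hB
      refine ⟨b, fun X hX => ?_⟩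
      obtain ⟨m, hm⟩ := hψcommon σ X hX
      exact ⟨m, hτb.trans hm⟩
end

section
/- Let μ be a Borel probability measure on 2^ω and φ : 2^{<ω} → 2^{<ω}. Suppose there exists c ∈ ℕ with |φ(σ)| ≤ c·|σ| for every σ ∈ 2^{<ω}, and there exists r ∈ ℝ such that lim_{n→∞} |φ(X↾n)|/n = r for μ-almost every X ∈ 2^ω. Then lim_{n→∞} Avg(φ, μ, n) = r; in particular Rate(φ, μ) = r. -/
open Filter MeasureTheory

/-- The average output/input ratio
`Avg(φ, μ, n) = (1/n) Σ_{σ ∈ 2^n} μ(⟦σ⟧) |φ(σ)|`, where strings of length `n`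
are indexed by `Fin n → Bool`. -/
noncomputable def Avg (φ : List Bool → List Bool) (μ : Measure (ℕ → Bool))
    (n : ℕ) : ℝ :=
  (1 / n : ℝ) *
    ∑ f : Fin n → Bool, (μ (cyl (List.ofFn f))).toReal * ((φ (List.ofFn f)).length : ℝ)

lemma seg_eq_ofFn (X : ℕ → Bool) (n : ℕ) :
    seg X n = List.ofFn (fun i : Fin n => X i) := by
  apply List.ext_getElem <;> simp [seg]

lemma cyl_eq_preimage (n : ℕ) (g : Fin n → Bool) :
    cyl (List.ofFn g) = (fun X (i : Fin n) => X i) ⁻¹' {g} := by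
  ext X
  simp only [cyl, Set.mem_setOf_eq, Set.mem_preimage, Set.mem_singleton_iff,
    List.length_ofFn, seg_eq_ofFn, List.ofFn_inj]

lemma measurable_pi_restrict (n : ℕ) :
    Measurable (fun (X : ℕ → Bool) (i : Fin n) => X i) :=
  measurable_pi_lambda _ (fun i => measurable_pi_apply (i : ℕ))

lemma avg_eq_integral (φ : List Bool → List Bool) (μ : Measure (ℕ → Bool))
    [IsProbabilityMeasure μ] (n : ℕ) :
    Avg φ μ n = ∫ X, ((φ (seg X n)).length : ℝ) / n ∂μ := by
  have hdecomp : (fun X : ℕ → Bool => ((φ (seg X n)).length : ℝ) / n)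
      = fun X => ∑ g : Fin n → Bool,
          Set.indicator ((fun X (i : Fin n) => X i) ⁻¹' {g})
            (fun _ => ((φ (List.ofFn g)).length : ℝ) / n) X := by
    funext X
    rw [Finset.sum_eq_single (fun i : Fin n => X i)]
    · rw [Set.indicator_of_mem (by simp [Set.mem_preimage])]
      rw [seg_eq_ofFn]
    · intro g _ hg
      exact Set.indicator_of_notMem (by simpa [Set.mem_preimage, eq_comm] using hg) _
    · intro h; exact absurd (Finset.mem_univ _) h
  rw [hdecomp, integral_finset_sum]
  · have : ∀ g : Fin n → Bool,
        (∫ X, Set.indicator ((fun X (i : Fin n) => X i) ⁻¹' {g})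
            (fun _ => ((φ (List.ofFn g)).length : ℝ) / n) X ∂μ)
        = (μ (cyl (List.ofFn g))).toReal * (((φ (List.ofFn g)).length : ℝ) / n) := by
      intro g
      rw [integral_indicator_const _ ((measurable_pi_restrict n) (measurableSet_singleton g)),
        cyl_eq_preimage]
      simp [mul_comm, measureReal_def]
    simp_rw [this]
    unfold Avg
    rw [Finset.mul_sum]
    apply Finset.sum_congr rfl
    intro g _
    ring
  · intro g _
    exact (integrable_const _).indicator
      ((measurable_pi_restrict n) (measurableSet_singleton g))

/-- If `|φ(σ)| ≤ c|σ|` for all strings `σ` and `|φ(X↾n)|/n → r` for `μ`-a.e. `X`,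
then `lim_n Avg(φ, μ, n) = r`; in particular `Rate(φ, μ) = limsup_n Avg(φ, μ, n) = r`. -/
theorem stmt5 (μ : Measure (ℕ → Bool)) [IsProbabilityMeasure μ]
    (φ : List Bool → List Bool) (c : ℕ)
    (hc : ∀ σ : List Bool, (φ σ).length ≤ c * σ.length)
    (r : ℝ)
    (hae : ∀ᵐ X ∂μ,
      Tendsto (fun n : ℕ => ((φ (seg X n)).length : ℝ) / n) atTop (nhds r)) :
    Tendsto (fun n : ℕ => Avg φ μ n) atTop (nhds r) ∧
      limsup (fun n : ℕ => Avg φ μ n) atTop = r := by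
  have hmeas : ∀ n : ℕ, AEStronglyMeasurable
      (fun X : ℕ → Bool => ((φ (seg X n)).length : ℝ) / n) μ := by
    intro n
    have : Measurable (fun X : ℕ → Bool => ((φ (seg X n)).length : ℝ) / n) := by
      have h := (measurable_of_countable
        (fun g : Fin n → Bool => ((φ (List.ofFn g)).length : ℝ) / n)).comp
        (measurable_pi_restrict n)
      convert h using 1
      funext X
      simp [Function.comp, seg_eq_ofFn]
    exact this.aestronglyMeasurable
  have hbound : ∀ n : ℕ, ∀ᵐ X ∂μ,
      ‖((φ (seg X n)).length : ℝ) / n‖ ≤ (c : ℝ) := by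
    intro n
    apply ae_of_all
    intro X
    rcases Nat.eq_zero_or_pos n with hn | hn
    · simp [hn]
    · rw [Real.norm_eq_abs, abs_of_nonneg (by positivity)]
      rw [div_le_iff₀ (by exact_mod_cast hn)]
      calc ((φ (seg X n)).length : ℝ) ≤ (c * (seg X n).length : ℕ) := by
            exact_mod_cast hc (seg X n)
        _ = (c : ℝ) * n := by simp [seg]
  have htendsto : Tendsto (fun n : ℕ =>
      ∫ X, ((φ (seg X n)).length : ℝ) / n ∂μ) atTop (nhds r) := by
    have hr : r = ∫ X, r ∂μ := by simp
    rw [show nhds r = nhds (∫ X, r ∂μ) by rw [← hr]]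
    exact tendsto_integral_of_dominated_convergence (fun _ => (c : ℝ))
      hmeas (integrable_const _) hbound hae
  have hAvg : Tendsto (fun n : ℕ => Avg φ μ n) atTop (nhds r) := by
    simpa only [avg_eq_integral] using htendsto
  exact ⟨hAvg, hAvg.limsup_eq⟩
end

section
/- Let D ⊆ 2^{<ω} be a prefix-free set of nonempty binary strings with Σ_{σ∈D} 2^{-|σ|} = 1 and AvgRT(D) = Σ_{σ∈D} |σ|·2^{-|σ|} < ∞. Then for λ-almost every X ∈ 2^ω, writing X = σ₁⌢σ₂⌢σ₃⌢⋯ with all σ_i ∈ D (such a decomposition exists and is unique λ-almost surely) and setting n_k = |σ₁| + ⋯ + |σ_k|, one has n_k/k → AvgRT(D) as k → ∞. -/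
open Filter MeasureTheory

/-- `D ⊆ 2^{<ω}` is prefix-free: no element is a proper initial segment of another. -/
def PrefixFree (D : Set (List Bool)) : Prop :=
  ∀ σ ∈ D, ∀ τ ∈ D, σ <+: τ → σ = τ

/-- The average running time `AvgRT(D) = Σ_{σ∈D} |σ|·2^{-|σ|}` of the DDG-tree
with terminal set `D`. -/
noncomputable def AvgRT (D : Set (List Bool)) : ℝ :=
  ∑' σ : D, ((σ : List Bool).length : ℝ) * ((1 : ℝ) / 2) ^ (σ : List Bool).length

namespace S13

open ProbabilityTheory

/-! ### Basic facts about segments and cylinders -/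

def shift (n : ℕ) (X : ℕ → Bool) : ℕ → Bool := fun i => X (n + i)

@[simp] lemma seg_length (X : ℕ → Bool) (n : ℕ) : (seg X n).length = n := by
  simp [seg]

lemma seg_add (X : ℕ → Bool) (a b : ℕ) :
    seg X (a + b) = seg X a ++ seg (shift a X) b := by
  simp [seg, List.range_add, shift, Function.comp]

lemma seg_take {a b : ℕ} (h : a ≤ b) (X : ℕ → Bool) :
    (seg X b).take a = seg X a := by
  simp [seg, ← List.map_take, List.take_range, Nat.min_eq_left h]

lemma mem_cyl {X : ℕ → Bool} {σ : List Bool} : X ∈ cyl σ ↔ seg X σ.length = σ := Iff.rfl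

lemma prefix_of_mem_cyl {X : ℕ → Bool} {σ : List Bool} {n : ℕ} (h : X ∈ cyl σ)
    (hn : σ.length ≤ n) : σ <+: seg X n := by
  rw [← h, ← seg_take hn X]
  exact List.take_prefix _ _

lemma mem_cyl_of_prefix {X : ℕ → Bool} {σ : List Bool} {n : ℕ}
    (h : σ <+: seg X n) : X ∈ cyl σ := by
  have hl : σ.length ≤ n := by simpa using h.length_le
  rw [mem_cyl, ← seg_take hl X]
  exact (List.prefix_iff_eq_take.1 h).symm

lemma cyl_subset {σ τ : List Bool} (h : σ <+: τ) : cyl τ ⊆ cyl σ := by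
  intro X hX
  exact mem_cyl_of_prefix (h.trans (prefix_of_mem_cyl hX le_rfl))

lemma comparable_of_mem_cyl {X : ℕ → Bool} {σ τ : List Bool}
    (hσ : X ∈ cyl σ) (hτ : X ∈ cyl τ) : σ <+: τ ∨ τ <+: σ := by
  have h1 : σ <+: seg X (max σ.length τ.length) := prefix_of_mem_cyl hσ (le_max_left _ _)
  have h2 : τ <+: seg X (max σ.length τ.length) := prefix_of_mem_cyl hτ (le_max_right _ _)
  exact List.prefix_or_prefix_of_prefix h1 h2

lemma cyl_append (τ σ : List Bool) :
    cyl (τ ++ σ) = cyl τ ∩ shift τ.length ⁻¹' (cyl σ) := by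
  ext X
  simp only [cyl, Set.mem_setOf_eq, Set.mem_inter_iff, Set.mem_preimage,
    List.length_append, seg_add]
  constructor
  · intro h
    have := List.append_inj h (by simp)
    exact ⟨this.1, this.2⟩
  · rintro ⟨h1, h2⟩; rw [h1, h2]

lemma measurable_shift (n : ℕ) : Measurable (shift n) :=
  measurable_pi_lambda _ fun i => measurable_pi_apply _

lemma measurableSet_cyl (σ : List Bool) : MeasurableSet (cyl σ) := by
  have : cyl σ = ⋂ i : Fin σ.length, {X : ℕ → Bool | X i = σ.get i} := by
    ext X
    simp only [cyl, Set.mem_setOf_eq, Set.mem_iInter]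
    constructor
    · intro h i
      have h2 : (i : ℕ) < (seg X σ.length).length := by simp [i.2]
      have := List.get_of_eq h ⟨i, h2⟩
      simpa [seg] using this
    · intro h
      apply List.ext_get (by simp)
      intro i h1 h2
      simpa [seg] using h ⟨i, h2⟩
  rw [this]
  exact MeasurableSet.iInter fun i =>
    (measurable_pi_apply (i : ℕ)) (MeasurableSet.singleton _)

/-! ### The block-decomposition machinery -/

variable (D : Set (List Bool))

noncomputable def blockLen (X : ℕ → Bool) : ℕ :=
  sInf {n | ∃ σ ∈ D, σ.length = n ∧ X ∈ cyl σ}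

noncomputable def L : ℕ → (ℕ → Bool) → ℕ
  | 0 => blockLen D
  | (k+1) => fun X => L k (shift (blockLen D X) X)

def Ev (n : ℕ) (S : ℕ → Set ℕ) : Set (ℕ → Bool) := {X | ∀ i < n, L D i X ∈ S i}

open Classical in
noncomputable def w (S : Set ℕ) : ENNReal :=
  ∑' σ : D, if (σ : List Bool).length ∈ S then (1/2 : ENNReal)^(σ : List Bool).length else 0

variable {D}

lemma eq_of_mem_cyl (hpf : PrefixFree D) {σ τ : List Bool} (hσ : σ ∈ D) (hτ : τ ∈ D)
    {X : ℕ → Bool} (hXσ : X ∈ cyl σ) (hXτ : X ∈ cyl τ) : σ = τ := by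
  rcases comparable_of_mem_cyl hXσ hXτ with h | h
  · exact hpf σ hσ τ hτ h
  · exact (hpf τ hτ σ hσ h).symm

lemma blockLen_eq (hpf : PrefixFree D) {σ : List Bool} (hσ : σ ∈ D)
    {X : ℕ → Bool} (hX : X ∈ cyl σ) : blockLen D X = σ.length := by
  have hset : {n | ∃ τ ∈ D, τ.length = n ∧ X ∈ cyl τ} = {σ.length} := by
    ext n
    simp only [Set.mem_setOf_eq, Set.mem_singleton_iff]
    constructor
    · rintro ⟨τ, hτ, rfl, hXτ⟩
      rw [eq_of_mem_cyl hpf hτ hσ hXτ hX]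
    · rintro rfl; exact ⟨σ, hσ, rfl, hX⟩
  rw [blockLen, hset, csInf_singleton]

lemma exists_of_blockLen_ne {X : ℕ → Bool} (hX : blockLen D X ≠ 0) :
    ∃ σ ∈ D, σ.length = blockLen D X ∧ X ∈ cyl σ := by
  have hne : {n | ∃ σ ∈ D, σ.length = n ∧ X ∈ cyl σ}.Nonempty := by
    by_contra h
    rw [Set.not_nonempty_iff_eq_empty] at h
    exact hX (by rw [blockLen, h]; exact Nat.sInf_empty)
  exact Nat.sInf_mem hne

lemma L_succ_eq (k : ℕ) (X : ℕ → Bool) :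
    L D (k+1) X = L D k (shift (blockLen D X) X) := rfl

lemma L_zero_propagate : ∀ (k : ℕ) (X : ℕ → Bool), L D k X = 0 → L D (k+1) X = 0 := by
  intro k
  induction k with
  | zero =>
    intro X h
    have h0 : blockLen D X = 0 := h
    show L D 0 (shift (blockLen D X) X) = 0
    have : shift 0 X = X := by funext i; simp [shift]
    rw [h0, this]; exact h
  | succ k ih =>
    intro X h
    exact ih _ h

lemma L_ne_zero_of (k m : ℕ) (hm : m ≤ k) (X : ℕ → Bool) (h : L D k X ≠ 0) :
    L D m X ≠ 0 := by
  intro h0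
  apply h
  have : ∀ j, L D (m + j) X = 0 := by
    intro j
    induction j with
    | zero => exact h0
    | succ j ih => exact L_zero_propagate _ _ ih
  have := this (k - m)
  rwa [Nat.add_sub_cancel' hm] at this

/-- The key recursive set identity. -/
lemma Ev_succ (hpf : PrefixFree D) (n : ℕ) (S : ℕ → Set ℕ) (hS : 0 ∉ S 0) :
    Ev D (n+1) S =
      ⋃ σ : {σ : List Bool // σ ∈ D ∧ σ.length ∈ S 0},
        (cyl σ ∩ shift (σ : List Bool).length ⁻¹' Ev D n (fun i => S (i+1))) := by
  ext X
  simp only [Ev, Set.mem_setOf_eq, Set.mem_iUnion, Set.mem_inter_iff, Set.mem_preimage]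
  constructor
  · intro h
    have h0 : L D 0 X ∈ S 0 := h 0 (Nat.succ_pos _)
    have hb : blockLen D X ≠ 0 := by
      intro hc
      have h0' : blockLen D X ∈ S 0 := h0
      rw [hc] at h0'
      exact hS h0'
    obtain ⟨σ, hσD, hσl, hXσ⟩ := exists_of_blockLen_ne hb
    refine ⟨⟨σ, hσD, by rwa [hσl]⟩, hXσ, ?_⟩
    intro i hi
    have := h (i+1) (by omega)
    rwa [L_succ_eq, ← hσl] at this
  · rintro ⟨⟨σ, hσD, hσS⟩, hXσ, h⟩
    have hb : blockLen D X = σ.length := blockLen_eq hpf hσD hXσ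
    intro i hi
    cases i with
    | zero => show blockLen D X ∈ S 0; rwa [hb]
    | succ i =>
      rw [L_succ_eq, hb]
      exact h i (by omega)

lemma measurableSet_Ev (hpf : PrefixFree D) :
    ∀ (n : ℕ) (S : ℕ → Set ℕ), (∀ i, 0 ∉ S i) → MeasurableSet (Ev D n S) := by
  intro n
  induction n with
  | zero =>
    intro S _
    have : Ev D 0 S = Set.univ := by ext X; simp [Ev]
    rw [this]; exact MeasurableSet.univ
  | succ n ih =>
    intro S hS
    rw [Ev_succ hpf n S (hS 0)]
    exact MeasurableSet.iUnion fun σ =>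
      ((measurableSet_cyl _).inter ((measurable_shift _) (ih _ (fun i => hS (i+1)))))

/-! ### The generating π-system of cylinders -/

lemma cyl_nonempty (σ : List Bool) : (cyl σ).Nonempty := by
  refine ⟨fun i => σ.getD i false, ?_⟩
  rw [mem_cyl]
  apply List.ext_getElem (by simp [seg_length])
  intro i h1 h2
  simp [seg, List.getD_eq_getElem σ false h2, List.getElem?_eq_getElem h2]

lemma isPiSystem_cyl : IsPiSystem (Set.range cyl) := by
  rintro _ ⟨σ, rfl⟩ _ ⟨τ, rfl⟩ hne
  obtain ⟨X, hXσ, hXτ⟩ := hne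
  rcases comparable_of_mem_cyl hXσ hXτ with h | h
  · rw [Set.inter_eq_right.2 (cyl_subset h)]; exact ⟨τ, rfl⟩
  · rw [Set.inter_eq_left.2 (cyl_subset h)]; exact ⟨σ, rfl⟩

lemma generateFrom_cyl :
    (inferInstance : MeasurableSpace (ℕ → Bool)) =
      MeasurableSpace.generateFrom (Set.range cyl) := by
  apply le_antisymm
  · rw [show (inferInstance : MeasurableSpace (ℕ → Bool)) = MeasurableSpace.pi from rfl,
      MeasurableSpace.pi]
    apply iSup_le
    intro i
    rw [MeasurableSpace.comap_le_iff_le_map]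
    intro s _
    show MeasurableSet[MeasurableSpace.generateFrom (Set.range cyl)]
      ((fun X : ℕ → Bool => X i) ⁻¹' s)
    have : (fun X : ℕ → Bool => X i) ⁻¹' s =
        ⋃ τ ∈ {l : List Bool | l.length = i + 1 ∧ l.getD i false ∈ s}, cyl τ := by
      ext X
      simp only [Set.mem_preimage, Set.mem_iUnion, Set.mem_setOf_eq]
      constructor
      · intro h
        refine ⟨seg X (i+1), ⟨seg_length _ _, ?_⟩, ?_⟩
        · have hg : (seg X (i+1)).getD i false = X i := by
            have hlt : i < (seg X (i+1)).length := by rw [seg_length]; omega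
            rw [List.getD_eq_getElem _ false hlt]
            simp [seg]
          rwa [hg]
        · rw [mem_cyl, seg_length]
      · rintro ⟨τ, ⟨hlen, hmem⟩, hX⟩
        rw [mem_cyl] at hX
        have : τ.getD i false = X i := by
          rw [← hX]
          have hlt : i < (seg X τ.length).length := by rw [seg_length]; omega
          rw [List.getD_eq_getElem _ false hlt]
          simp [seg]
        rwa [← this]
    rw [this]
    apply MeasurableSet.biUnion (Set.to_countable _)
    intro τ _
    exact MeasurableSpace.measurableSet_generateFrom ⟨τ, rfl⟩
  · rw [MeasurableSpace.generateFrom_le_iff]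
    rintro _ ⟨σ, rfl⟩
    exact measurableSet_cyl σ

variable {lam : Measure (ℕ → Bool)} [IsProbabilityMeasure lam]

/-- Lemma A: conditional on a cylinder, the shifted sequence has law `lam`. -/
lemma lemA (hlam : ∀ σ : List Bool, lam (cyl σ) = (1 / 2 : ENNReal) ^ σ.length)
    (τ : List Bool) {E : Set (ℕ → Bool)} (hE : MeasurableSet E) :
    lam (cyl τ ∩ shift τ.length ⁻¹' E) = (1/2 : ENNReal)^τ.length * lam E := by
  have key : Measure.map (shift τ.length) (lam.restrict (cyl τ)) =
      ((1/2 : ENNReal)^τ.length) • lam := by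
    have hfin : IsFiniteMeasure (Measure.map (shift τ.length) (lam.restrict (cyl τ))) := by
      constructor
      rw [Measure.map_apply (measurable_shift _) MeasurableSet.univ]
      simp only [Set.preimage_univ]
      exact lt_of_le_of_lt (measure_mono (Set.subset_univ _))
        ((Measure.restrict_apply_le _ _).trans_lt (measure_lt_top _ _))
    refine ext_of_generate_finite (Set.range cyl) generateFrom_cyl isPiSystem_cyl ?_ ?_
    · rintro _ ⟨σ, rfl⟩
      rw [Measure.map_apply (measurable_shift _) (measurableSet_cyl σ),
        Measure.restrict_apply ((measurable_shift _) (measurableSet_cyl σ)),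
        Set.inter_comm, ← cyl_append, hlam]
      simp only [Measure.smul_apply, smul_eq_mul]
      rw [hlam]
      simp [List.length_append, pow_add]
    · rw [Measure.map_apply (measurable_shift _) MeasurableSet.univ]
      simp only [Set.preimage_univ, Measure.restrict_apply MeasurableSet.univ,
        Set.univ_inter, Measure.smul_apply, smul_eq_mul]
      rw [hlam, measure_univ, mul_one]
  have := congrArg (fun μ : Measure (ℕ → Bool) => μ E) key
  simp only [Measure.smul_apply, smul_eq_mul] at this
  rw [Measure.map_apply (measurable_shift _) hE,
    Measure.restrict_apply ((measurable_shift _) hE), Set.inter_comm] at this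
  exact this

/-- Lemma M: the measure of the block-length constraint events. -/
lemma measure_Ev (hpf : PrefixFree D)
    (hlam : ∀ σ : List Bool, lam (cyl σ) = (1 / 2 : ENNReal) ^ σ.length) :
    ∀ (n : ℕ) (S : ℕ → Set ℕ), (∀ i, 0 ∉ S i) →
      lam (Ev D n S) = ∏ i ∈ Finset.range n, w D (S i) := by
  intro n
  induction n with
  | zero =>
    intro S _
    have : Ev D 0 S = Set.univ := by ext X; simp [Ev]
    simp [this]
  | succ n ih =>
    intro S hS
    rw [Ev_succ hpf n S (hS 0)]
    have hdisj : Pairwise (Function.onFun Disjoint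
        (fun σ : {σ : List Bool // σ ∈ D ∧ σ.length ∈ S 0} =>
          cyl σ ∩ shift (σ : List Bool).length ⁻¹' Ev D n (fun i => S (i+1)))) := by
      rintro ⟨σ, hσ⟩ ⟨τ, hτ⟩ hne
      have hst : σ ≠ τ := fun h => hne (by simpa using h)
      refine Set.disjoint_left.2 fun X hX1 hX2 => ?_
      exact hst (eq_of_mem_cyl hpf hσ.1 hτ.1 hX1.1 hX2.1)
    have hmeas : ∀ σ : {σ : List Bool // σ ∈ D ∧ σ.length ∈ S 0},
        MeasurableSet (cyl σ ∩ shift (σ : List Bool).length ⁻¹' Ev D n (fun i => S (i+1))) :=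
      fun σ => (measurableSet_cyl _).inter
        ((measurable_shift _) (measurableSet_Ev hpf n _ (fun i => hS (i+1))))
    rw [measure_iUnion hdisj hmeas]
    have hterm : ∀ σ : {σ : List Bool // σ ∈ D ∧ σ.length ∈ S 0},
        lam (cyl σ ∩ shift (σ : List Bool).length ⁻¹' Ev D n (fun i => S (i+1))) =
          (1/2 : ENNReal)^(σ : List Bool).length * lam (Ev D n (fun i => S (i+1))) :=
      fun σ => lemA hlam _ (measurableSet_Ev hpf n _ (fun i => hS (i+1)))
    calc ∑' σ : {σ : List Bool // σ ∈ D ∧ σ.length ∈ S 0},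
          lam (cyl σ ∩ shift (σ : List Bool).length ⁻¹' Ev D n (fun i => S (i+1)))
        = (∑' σ : {σ : List Bool // σ ∈ D ∧ σ.length ∈ S 0},
            (1/2 : ENNReal)^(σ : List Bool).length) * lam (Ev D n (fun i => S (i+1))) := by
          rw [← ENNReal.tsum_mul_right]; exact tsum_congr hterm
      _ = w D (S 0) * ∏ i ∈ Finset.range n, w D (S (i+1)) := by
          rw [ih _ (fun i => hS (i+1))]
          congr 1
          classical
          let e : {σ : List Bool // σ ∈ D ∧ σ.length ∈ S 0} ≃
              {x : ↥D // (x : List Bool).length ∈ S 0} :=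
            { toFun := fun σ => ⟨⟨σ.1, σ.2.1⟩, σ.2.2⟩
              invFun := fun x => ⟨x.1.1, x.1.2, x.2⟩
              left_inv := fun σ => rfl
              right_inv := fun x => rfl }
          have h1 : ∀ σ : ↥D,
              (if (σ : List Bool).length ∈ S 0 then (1/2 : ENNReal)^(σ : List Bool).length else 0)
              = Set.indicator {x : ↥D | (x : List Bool).length ∈ S 0}
                  (fun x : ↥D => (1/2 : ENNReal)^(x : List Bool).length) σ := by
            intro σ
            rw [Set.indicator_apply]
            rfl
          calc ∑' σ : {σ : List Bool // σ ∈ D ∧ σ.length ∈ S 0},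
                (1/2 : ENNReal)^(σ : List Bool).length
              = ∑' x : {x : ↥D // (x : List Bool).length ∈ S 0},
                  (1/2 : ENNReal)^((x : ↥D) : List Bool).length :=
                by
                  rw [← e.tsum_eq (fun x : {x : ↥D // (x : List Bool).length ∈ S 0} =>
                    (1/2 : ENNReal)^((x : ↥D) : List Bool).length)]
                  exact tsum_congr fun σ => rfl
            _ = w D (S 0) := by
                rw [w, tsum_congr h1, ← tsum_subtype]
                exact tsum_congr fun x => rfl
      _ = ∏ i ∈ Finset.range (n+1), w D (S i) := by
          rw [Finset.prod_range_succ', mul_comm]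

/-! ### Values of `w` -/

lemma summable_pow (hsum : ∑' σ : D, ((1 : ℝ) / 2) ^ (σ : List Bool).length = 1) :
    Summable (fun σ : D => ((1 : ℝ)/2) ^ (σ : List Bool).length) := by
  by_contra h
  rw [tsum_eq_zero_of_not_summable h] at hsum
  norm_num at hsum

lemma half_ofReal : (1/2 : ENNReal) = ENNReal.ofReal ((1:ℝ)/2) := by
  rw [ENNReal.ofReal_div_of_pos (by norm_num)]
  norm_num

lemma tsumE (hsum : ∑' σ : D, ((1 : ℝ) / 2) ^ (σ : List Bool).length = 1) :
    ∑' σ : D, (1/2 : ENNReal)^(σ : List Bool).length = 1 := by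
  have h1 : ∀ σ : D, (1/2 : ENNReal)^(σ : List Bool).length
      = ENNReal.ofReal (((1:ℝ)/2)^(σ : List Bool).length) := by
    intro σ
    rw [ENNReal.ofReal_pow (by norm_num), ← half_ofReal]
  rw [tsum_congr h1, ← ENNReal.ofReal_tsum_of_nonneg (fun σ => by positivity)
    (summable_pow hsum), hsum, ENNReal.ofReal_one]

lemma w_eq_one (hne : ∀ σ ∈ D, σ ≠ ([] : List Bool))
    (hsum : ∑' σ : D, ((1 : ℝ) / 2) ^ (σ : List Bool).length = 1)
    {S : Set ℕ} (hS : ∀ n, n ≠ 0 → n ∈ S) : w D S = 1 := by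
  classical
  rw [w]
  have hcg : ∀ σ : D,
      (if (σ : List Bool).length ∈ S then (1/2 : ENNReal)^(σ : List Bool).length else 0)
      = (1/2 : ENNReal)^(σ : List Bool).length := by
    intro σ
    have : (σ : List Bool).length ∈ S := by
      apply hS
      simpa [List.length_eq_zero_iff] using hne σ σ.2
    simp [this]
  rw [tsum_congr hcg]
  exact tsumE hsum

/-! ### Marginal and joint laws of the block lengths -/

section Marginals

variable (hne : ∀ σ ∈ D, σ ≠ ([] : List Bool)) (hpf : PrefixFree D)
  (hsum : ∑' σ : D, ((1 : ℝ) / 2) ^ (σ : List Bool).length = 1)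
  (hlam : ∀ σ : List Bool, lam (cyl σ) = (1 / 2 : ENNReal) ^ σ.length)

/-- the "good" event that the first `k` blocks are defined -/
def G (k : ℕ) : Set (ℕ → Bool) := Ev D k (fun _ => {0}ᶜ)

include hne hpf hsum hlam in
lemma G_compl_null (k : ℕ) : lam (G (D := D) k)ᶜ = 0 := by
  have hmeas : MeasurableSet (G (D := D) k) :=
    measurableSet_Ev hpf k _ (fun i => by simp)
  have h1 : lam (G (D := D) k) = 1 := by
    rw [G, measure_Ev hpf hlam k _ (fun i => by simp)]
    rw [Finset.prod_congr rfl (fun i _ => w_eq_one hne hsum (fun n hn => by simpa using hn))]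
    simp
  rw [measure_compl hmeas (measure_ne_top _ _), h1, measure_univ, tsub_self]

lemma preimage_inter_G (i : ℕ) (A : Set ℕ) :
    L D i ⁻¹' A ∩ G (D := D) (i+1) =
      Ev D (i+1) (fun m => if m = i then A \ {0} else {0}ᶜ) := by
  ext X
  simp only [Set.mem_inter_iff, Set.mem_preimage, G, Ev, Set.mem_setOf_eq]
  constructor
  · rintro ⟨hA, hG⟩
    intro m hm
    by_cases h : m = i
    · subst h
      simp only [if_pos rfl]
      exact ⟨hA, hG m hm⟩
    · simp only [if_neg h]
      exact hG m hm
  · intro h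
    constructor
    · have := h i (Nat.lt_succ_self i)
      simp only [if_pos rfl] at this
      exact this.1
    · intro m hm
      have := h m hm
      by_cases hmi : m = i
      · subst hmi
        simp only [if_pos rfl] at this
        simpa using this.2
      · simpa [if_neg hmi] using this

include hne hpf hsum hlam in
lemma measure_L_preimage (i : ℕ) (A : Set ℕ) :
    lam (L D i ⁻¹' A) = w D (A \ {0}) := by
  classical
  rw [← measure_inter_conull (G_compl_null hne hpf hsum hlam (i+1)),
    preimage_inter_G, measure_Ev hpf hlam (i+1) _ ?_]
  · have : ∀ m ∈ Finset.range (i+1),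
        w D (if m = i then A \ {0} else {0}ᶜ) = if m = i then w D (A \ {0}) else 1 := by
      intro m _
      by_cases h : m = i
      · simp [h]
      · simp [h, w_eq_one hne hsum (S := {0}ᶜ) (fun n hn => by simpa using hn)]
    rw [Finset.prod_congr rfl this, Finset.prod_ite_eq' (Finset.range (i+1)) i
      (fun _ => w D (A \ {0}))]
    simp
  · intro m
    by_cases h : m = i <;> simp [h]

include hne hpf hsum hlam in
lemma measure_L_preimage₂ {i j : ℕ} (hij : i < j) (A B : Set ℕ) :
    lam (L D i ⁻¹' A ∩ L D j ⁻¹' B) = w D (A \ {0}) * w D (B \ {0}) := by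
  classical
  have hid : L D i ⁻¹' A ∩ L D j ⁻¹' B ∩ G (D := D) (j+1) =
      Ev D (j+1) (fun m => if m = i then A \ {0} else if m = j then B \ {0} else {0}ᶜ) := by
    ext X
    simp only [Set.mem_inter_iff, Set.mem_preimage, G, Ev, Set.mem_setOf_eq]
    constructor
    · rintro ⟨⟨hA, hB⟩, hG⟩
      intro m hm
      rcases eq_or_ne m i with h | h
      · subst h; simp only [if_pos rfl]; exact ⟨hA, hG m hm⟩
      · rcases eq_or_ne m j with h2 | h2
        · subst h2
          simp only [if_neg h, if_pos rfl]
          exact ⟨hB, hG m hm⟩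
        · simp only [if_neg h, if_neg h2]
          exact hG m hm
    · intro h
      have hi' := h i (by omega)
      simp only [if_pos rfl] at hi'
      have hj' := h j (by omega)
      rw [if_neg (by omega), if_pos rfl] at hj'
      refine ⟨⟨hi'.1, hj'.1⟩, ?_⟩
      intro m hm
      have := h m hm
      rcases eq_or_ne m i with h1 | h1
      · subst h1; simpa using hi'.2
      · rcases eq_or_ne m j with h2 | h2
        · subst h2; simpa using hj'.2
        · simpa [if_neg h1, if_neg h2] using this
  rw [← measure_inter_conull (G_compl_null hne hpf hsum hlam (j+1)), hid,
    measure_Ev hpf hlam (j+1) _ ?_]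
  · have hterm : ∀ m ∈ Finset.range (j+1),
        w D (if m = i then A \ {0} else if m = j then B \ {0} else {0}ᶜ) =
          (if m = i then w D (A \ {0}) else 1) * (if m = j then w D (B \ {0}) else 1) := by
      intro m _
      rcases eq_or_ne m i with h | h
      · subst h
        rw [if_pos rfl, if_pos rfl, if_neg (by omega), mul_one]
      · rcases eq_or_ne m j with h2 | h2
        · subst h2
          rw [if_neg h, if_pos rfl, if_neg h, if_pos rfl, one_mul]
        · rw [if_neg h, if_neg h2, if_neg h, if_neg h2, mul_one,
            w_eq_one hne hsum (fun n hn => by simpa using hn)]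
    rw [Finset.prod_congr rfl hterm, Finset.prod_mul_distrib,
      Finset.prod_ite_eq' (Finset.range (j+1)) i (fun _ => w D (A \ {0})),
      Finset.prod_ite_eq' (Finset.range (j+1)) j (fun _ => w D (B \ {0}))]
    simp [Finset.mem_range, Nat.lt_succ_iff, hij.le]
  · intro m
    rcases eq_or_ne m i with h | h
    · simp [h]
    · rcases eq_or_ne m j with h2 | h2
      · simp [h, h2, hij.ne']
      · simp [h, h2]

include hpf in
lemma measurable_L (i : ℕ) : Measurable (L D i) := by
  apply measurable_to_countable'
  intro a
  rcases eq_or_ne a 0 with rfl | ha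
  · have : L D i ⁻¹' {0} = (G (D := D) (i+1))ᶜ := by
      ext X
      simp only [Set.mem_preimage, Set.mem_singleton_iff, Set.mem_compl_iff, G, Ev,
        Set.mem_setOf_eq, not_forall]
      constructor
      · intro h
        exact ⟨i, Nat.lt_succ_self i, by simp [h]⟩
      · rintro ⟨m, hm, hm0⟩
        by_contra h
        exact (L_ne_zero_of i m (by omega) X h) (by simpa using hm0)
    rw [this]
    exact (measurableSet_Ev hpf (i+1) _ (fun m => by simp)).compl
  · have : L D i ⁻¹' {a} = Ev D (i+1) (fun m => if m = i then {a} \ {0} else {0}ᶜ) := by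
      rw [← preimage_inter_G]
      apply (Set.inter_eq_left.2 ?_).symm
      intro X hX
      simp only [Set.mem_preimage, Set.mem_singleton_iff] at hX
      intro m hm
      simp only [Set.mem_compl_iff, Set.mem_singleton_iff]
      exact L_ne_zero_of i m (by omega) X (by simp [hX, ha])
    rw [this]
    apply measurableSet_Ev hpf
    intro m
    by_cases h : m = i <;> simp [h]

include hne hpf hsum hlam in
lemma map_L_eq (i : ℕ) : lam.map (L D i) = lam.map (L D 0) := by
  apply Measure.ext_of_singleton
  intro a
  rw [Measure.map_apply (measurable_L hpf i) (measurableSet_singleton a),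
    Measure.map_apply (measurable_L hpf 0) (measurableSet_singleton a),
    measure_L_preimage hne hpf hsum hlam, measure_L_preimage hne hpf hsum hlam]

include hne hpf hsum hlam in
lemma indep_L {i j : ℕ} (hij : i ≠ j) : IndepFun (L D i) (L D j) lam := by
  have key : ∀ {i j : ℕ}, i < j → IndepFun (L D i) (L D j) lam := by
    intro i j h
    rw [indepFun_iff_measure_inter_preimage_eq_mul]
    intro s t _ _
    rw [measure_L_preimage₂ hne hpf hsum hlam h,
      measure_L_preimage hne hpf hsum hlam, measure_L_preimage hne hpf hsum hlam]
  rcases lt_or_gt_of_ne hij with h | h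
  · exact key h
  · exact (key h).symm

end Marginals

/-! ### Integrability and expectation of the block length -/

section Integral

variable (hne : ∀ σ ∈ D, σ ≠ ([] : List Bool)) (hpf : PrefixFree D)
  (hsum : ∑' σ : D, ((1 : ℝ) / 2) ^ (σ : List Bool).length = 1)
  (hlam : ∀ σ : List Bool, lam (cyl σ) = (1 / 2 : ENNReal) ^ σ.length)

lemma tsum_len_eq (hfin : Summable (fun σ : D =>
      ((σ : List Bool).length : ℝ) * ((1 : ℝ) / 2) ^ (σ : List Bool).length)) :
    ∑' σ : D, ((σ : List Bool).length : ENNReal) * (1/2 : ENNReal)^(σ : List Bool).length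
      = ENNReal.ofReal (AvgRT D) := by
  have h1 : ∀ σ : D,
      ((σ : List Bool).length : ENNReal) * (1/2 : ENNReal)^(σ : List Bool).length
      = ENNReal.ofReal (((σ : List Bool).length : ℝ) * ((1:ℝ)/2)^(σ : List Bool).length) := by
    intro σ
    rw [ENNReal.ofReal_mul (by positivity), ENNReal.ofReal_pow (by norm_num),
      ← half_ofReal, ENNReal.ofReal_natCast]
  rw [tsum_congr h1, ← ENNReal.ofReal_tsum_of_nonneg (fun σ => by positivity) hfin, AvgRT]

include hne hpf hsum hlam in
lemma lintegral_L0 :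
    ∫⁻ X, ((L D 0 X : ℕ) : ENNReal) ∂lam
      = ∑' σ : D,
          ((σ : List Bool).length : ENNReal) * (1/2 : ENNReal)^(σ : List Bool).length := by
  classical
  rw [← lintegral_map (f := fun n : ℕ => (n : ENNReal)) measurable_from_top (measurable_L hpf 0),
    lintegral_countable' (fun n : ℕ => (n : ENNReal))]
  have h2 : ∀ n : ℕ, ((n : ENNReal)) * (lam.map (L D 0)) {n}
      = ∑' σ : D, (if (σ : List Bool).length = n
          then ((σ : List Bool).length : ENNReal) * (1/2 : ENNReal)^(σ : List Bool).length
          else 0) := by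
    intro n
    rw [Measure.map_apply (measurable_L hpf 0) (measurableSet_singleton n),
      measure_L_preimage hne hpf hsum hlam 0 {n}]
    rcases eq_or_ne n 0 with rfl | hn
    · have : ({0} \ {0} : Set ℕ) = ∅ := by simp
      rw [this]
      have hz : ∀ σ : D, (if (σ : List Bool).length = 0
          then ((σ : List Bool).length : ENNReal) * (1/2 : ENNReal)^(σ : List Bool).length
          else 0) = 0 := by
        intro σ
        by_cases h : (σ : List Bool).length = 0 <;> simp [h]
      rw [tsum_congr hz, tsum_zero, w]
      simp
    · have : ({n} \ {0} : Set ℕ) = {n} := by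
        ext x
        simp only [Set.mem_diff, Set.mem_singleton_iff]
        constructor
        · exact fun h => h.1
        · rintro rfl; exact ⟨rfl, hn⟩
      rw [this, w, ← ENNReal.tsum_mul_left]
      apply tsum_congr
      intro σ
      by_cases h : (σ : List Bool).length = n
      · rw [if_pos (by simp [h]), if_pos (by simp [h]), ← h]
      · simp [h, Set.mem_singleton_iff]
  rw [tsum_congr h2, ENNReal.tsum_comm]
  apply tsum_congr
  intro σ
  have : ∀ n : ℕ, (if (σ : List Bool).length = n
      then ((σ : List Bool).length : ENNReal) * (1/2 : ENNReal)^(σ : List Bool).length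
      else 0) = (if n = (σ : List Bool).length
      then ((σ : List Bool).length : ENNReal) * (1/2 : ENNReal)^(σ : List Bool).length
      else 0) := by
    intro n
    by_cases h : (σ : List Bool).length = n
    · simp [h]
    · simp [h, Ne.symm h]
  rw [tsum_congr this, tsum_ite_eq]

include hne hpf hsum hlam in
lemma integrable_L0 (hfin : Summable (fun σ : D =>
      ((σ : List Bool).length : ℝ) * ((1 : ℝ) / 2) ^ (σ : List Bool).length)) :
    Integrable (fun X => ((L D 0 X : ℕ) : ℝ)) lam := by
  have hmeas : Measurable (fun X => ((L D 0 X : ℕ) : ℝ)) :=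
    measurable_from_top.comp (measurable_L hpf 0)
  refine ⟨hmeas.aestronglyMeasurable, ?_⟩
  rw [HasFiniteIntegral]
  have : ∀ X, ‖((L D 0 X : ℕ) : ℝ)‖ₑ = ((L D 0 X : ℕ) : ENNReal) := by
    intro X
    simp
  rw [lintegral_congr this, lintegral_L0 hne hpf hsum hlam, tsum_len_eq hfin]
  exact ENNReal.ofReal_lt_top

include hne hpf hsum hlam in
lemma integral_L0 (hfin : Summable (fun σ : D =>
      ((σ : List Bool).length : ℝ) * ((1 : ℝ) / 2) ^ (σ : List Bool).length)) :
    ∫ X, ((L D 0 X : ℕ) : ℝ) ∂lam = AvgRT D := by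
  have hmeas : Measurable (fun X => ((L D 0 X : ℕ) : ℝ)) :=
    measurable_from_top.comp (measurable_L hpf 0)
  rw [integral_eq_lintegral_of_nonneg_ae (ae_of_all _ (fun X => by positivity))
    hmeas.aestronglyMeasurable]
  have : ∀ X, ENNReal.ofReal ((L D 0 X : ℕ) : ℝ) = ((L D 0 X : ℕ) : ENNReal) := by
    intro X
    rw [ENNReal.ofReal_natCast]
  rw [lintegral_congr this, lintegral_L0 hne hpf hsum hlam, tsum_len_eq hfin,
    ENNReal.toReal_ofReal]
  exact tsum_nonneg (fun σ => by positivity)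

end Integral

/-! ### Identification of block lengths with a given decomposition -/

lemma flat_succ (B : ℕ → List Bool) (k : ℕ) :
    ((List.range (k+1)).map B).flatten
      = B 0 ++ ((List.range k).map (fun i => B (i+1))).flatten := by
  rw [List.range_succ_eq_map]
  simp only [List.map_map, List.map_cons, List.flatten_cons]
  rfl

lemma mem_cyl_head {X : ℕ → Bool} {B : ℕ → List Bool}
    (hseg : ∀ k, seg X (((List.range k).map B).flatten).length
      = ((List.range k).map B).flatten) : X ∈ cyl (B 0) := by
  rw [mem_cyl]
  have h1 : ((List.range 1).map B).flatten = B 0 := by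
    simp [List.range_succ]
  have := hseg 1
  rwa [h1] at this

lemma L_eq_of_decomp (hpf : PrefixFree D) :
    ∀ (i : ℕ) (X : ℕ → Bool) (B : ℕ → List Bool), (∀ n, B n ∈ D) →
      (∀ k, seg X (((List.range k).map B).flatten).length
        = ((List.range k).map B).flatten) →
      L D i X = (B i).length := by
  intro i
  induction i with
  | zero =>
    intro X B hB hseg
    exact blockLen_eq hpf (hB 0) (mem_cyl_head hseg)
  | succ i ih =>
    intro X B hB hseg
    have hb : blockLen D X = (B 0).length :=
      blockLen_eq hpf (hB 0) (mem_cyl_head hseg)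
    rw [L_succ_eq, hb]
    apply ih (shift (B 0).length X) (fun n => B (n+1)) (fun n => hB (n+1))
    intro k
    have h2 := hseg (k+1)
    rw [flat_succ, List.length_append, seg_add] at h2
    exact (List.append_inj h2 (by rw [seg_length])).2

end S13

open S13 ProbabilityTheory in
/-- Let `D` be a prefix-free set of nonempty strings with `Σ_{σ∈D} 2^{-|σ|} = 1`
and finite average running time `AvgRT(D)`.  Then for `λ`-a.e. `X`: whenever
`X = σ₁⌢σ₂⌢⋯` with all blocks `σᵢ = B(i) ∈ D`, the partial-sum lengths
`n_k = |σ₁| + ⋯ + |σ_k|` satisfy `n_k / k → AvgRT(D)`. -/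
theorem stmt13 (D : Set (List Bool))
    (hne : ∀ σ ∈ D, σ ≠ ([] : List Bool))
    (hpf : PrefixFree D)
    (hsum : ∑' σ : D, ((1 : ℝ) / 2) ^ (σ : List Bool).length = 1)
    (hfin : Summable (fun σ : D =>
      ((σ : List Bool).length : ℝ) * ((1 : ℝ) / 2) ^ (σ : List Bool).length))
    (lam : Measure (ℕ → Bool)) [IsProbabilityMeasure lam]
    (hlam : ∀ σ : List Bool, lam (cyl σ) = (1 / 2 : ENNReal) ^ σ.length) :
    ∀ᵐ X ∂lam, ∀ B : ℕ → List Bool,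
      (∀ i, B i ∈ D) →
      (∀ k : ℕ, seg X (((List.range k).map B).flatten).length =
        ((List.range k).map B).flatten) →
      Tendsto (fun k : ℕ => ((∑ i ∈ Finset.range k, (B i).length : ℕ) : ℝ) / k)
        atTop (nhds (AvgRT D)) := by
  classical
  have hint : Integrable (fun X => ((L D 0 X : ℕ) : ℝ)) lam :=
    integrable_L0 hne hpf hsum hlam hfin
  have hident : ∀ i, IdentDistrib (fun X => ((L D i X : ℕ) : ℝ))
      (fun X => ((L D 0 X : ℕ) : ℝ)) lam lam := by
    intro i
    have base : IdentDistrib (L D i) (L D 0) lam lam :=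
      ⟨(measurable_L hpf i).aemeasurable, (measurable_L hpf 0).aemeasurable,
        map_L_eq hne hpf hsum hlam i⟩
    exact base.comp (measurable_from_top (f := fun n : ℕ => (n : ℝ)))
  have hindep : Pairwise (Function.onFun (IndepFun · · lam) (fun i X => ((L D i X : ℕ) : ℝ))) := by
    intro i j hij
    exact (indep_L hne hpf hsum hlam hij).comp
      (measurable_from_top (f := fun n : ℕ => (n : ℝ)))
      (measurable_from_top (f := fun n : ℕ => (n : ℝ)))
  have hSLLN := strong_law_ae_real (fun i X => ((L D i X : ℕ) : ℝ)) hint hindep hident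
  have hexp : ∫ X, ((L D 0 X : ℕ) : ℝ) ∂lam = AvgRT D :=
    integral_L0 hne hpf hsum hlam hfin
  rw [show lam[fun X => ((L D 0 X : ℕ) : ℝ)] = AvgRT D from hexp] at hSLLN
  filter_upwards [hSLLN] with X hX B hBD hBseg
  have hLB : ∀ i, L D i X = (B i).length :=
    fun i => L_eq_of_decomp hpf i X B hBD hBseg
  have heq : (fun k : ℕ => ((∑ i ∈ Finset.range k, (B i).length : ℕ) : ℝ) / k) =
      (fun n : ℕ => (∑ i ∈ Finset.range n, ((L D i X : ℕ) : ℝ)) / n) := by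
    funext k
    congr 1
    rw [Nat.cast_sum]
    exact Finset.sum_congr rfl fun i _ => by rw [hLB i]
  rw [heq]
  exact hX
end

section
/- Let D ⊆ 2^{<ω} be a prefix-free set of nonempty binary strings with Σ_{σ∈D} 2^{-|σ|} = 1 and AvgRT(D) = Σ_{σ∈D} |σ|·2^{-|σ|} < ∞. For σ ∈ 2^{<ω} let N_D(σ) be the largest k such that some initial segment of σ is a concatenation σ₁⌢⋯⌢σ_k of k elements of D. Then for λ-almost every X ∈ 2^ω, lim_{n→∞} N_D(X↾n)/n = 1/AvgRT(D). -/
open Filter MeasureTheory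

/-- Some initial segment of `σ` is a concatenation of `k` elements of `D`. -/
def CatPrefix (D : Set (List Bool)) (k : ℕ) (σ : List Bool) : Prop :=
  ∃ B : Fin k → List Bool, (∀ i, B i ∈ D) ∧ (List.ofFn B).flatten <+: σ

set_option linter.unusedSectionVars false

namespace S14

def drp (n : ℕ) (X : ℕ → Bool) : ℕ → Bool := fun i => X (n + i)

@[simp] lemma drp_zero (X : ℕ → Bool) : drp 0 X = X := funext fun i => by simp [drp]

lemma drp_drp (m n : ℕ) (X : ℕ → Bool) : drp m (drp n X) = drp (n + m) X :=
  funext fun i => by simp [drp, Nat.add_assoc]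

@[simp] lemma seg_length (X : ℕ → Bool) (n : ℕ) : (seg X n).length = n := by simp [seg]

@[simp] lemma seg_zero (X : ℕ → Bool) : seg X 0 = [] := by simp [seg]

lemma seg_take {X : ℕ → Bool} {a b : ℕ} (h : a ≤ b) : (seg X b).take a = seg X a := by
  simp [seg, ← List.map_take, List.take_range, Nat.min_eq_left h]

lemma seg_prefix_seg {X : ℕ → Bool} {a b : ℕ} (h : a ≤ b) : seg X a <+: seg X b := by
  rw [← seg_take h]; exact List.take_prefix _ _

lemma prefix_seg_iff {σ : List Bool} {X : ℕ → Bool} {n : ℕ} :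
    σ <+: seg X n ↔ σ.length ≤ n ∧ seg X σ.length = σ := by
  constructor
  · intro h
    have hl : σ.length ≤ n := by simpa using h.length_le
    exact ⟨hl, ((List.prefix_iff_eq_take.mp h).trans (seg_take hl)).symm⟩
  · rintro ⟨hl, hs⟩; rw [← hs]; exact seg_prefix_seg hl

lemma seg_append (X : ℕ → Bool) (n m : ℕ) :
    seg X (n + m) = seg X n ++ seg (drp n X) m := by
  simp [seg, List.range_add, Function.comp, drp]

lemma mem_cyl {X : ℕ → Bool} {σ : List Bool} : X ∈ cyl σ ↔ seg X σ.length = σ := Iff.rfl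

lemma cyl_append (σ τ : List Bool) :
    cyl (σ ++ τ) = cyl σ ∩ drp σ.length ⁻¹' cyl τ := by
  ext X
  simp only [cyl, Set.mem_setOf_eq, Set.mem_inter_iff, Set.mem_preimage, List.length_append]
  rw [seg_append X σ.length τ.length]
  constructor
  · intro h
    have := List.append_inj h (by simp)
    exact ⟨this.1, this.2⟩
  · rintro ⟨h1, h2⟩; rw [h1, h2]

lemma comparable_of_mem {X : ℕ → Bool} {σ τ : List Bool} (hσ : X ∈ cyl σ) (hτ : X ∈ cyl τ) :
    σ <+: τ ∨ τ <+: σ := by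
  rcases le_total σ.length τ.length with h | h
  · left
    refine List.prefix_iff_eq_take.mpr ?_
    rw [← hτ, seg_take h, hσ]
  · right
    refine List.prefix_iff_eq_take.mpr ?_
    rw [← hσ, seg_take h, hτ]

lemma cyl_mono {σ τ : List Bool} (h : σ <+: τ) : cyl τ ⊆ cyl σ := by
  intro X hX
  rw [mem_cyl] at hX ⊢
  calc seg X σ.length = (seg X τ.length).take σ.length := (seg_take h.length_le).symm
  _ = τ.take σ.length := by rw [hX]
  _ = σ := (List.prefix_iff_eq_take.mp h).symm

lemma seg_getD {X : ℕ → Bool} {n i : ℕ} (h : i < n) : (seg X n).getD i false = X i := by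
  rw [List.getD_eq_getElem _ _ (by simpa using h)]
  simp [seg]

lemma measurable_drp (n : ℕ) : Measurable (drp n) :=
  measurable_pi_lambda _ fun i => measurable_pi_apply (n + i)

lemma measurableSet_cyl (σ : List Bool) : MeasurableSet (cyl σ) := by
  have : cyl σ = ⋂ i ∈ Finset.range σ.length, {X : ℕ → Bool | X i = σ.getD i false} := by
    ext X
    simp only [Set.mem_iInter, Finset.mem_range, Set.mem_setOf_eq, mem_cyl]
    constructor
    · intro h i hi
      rw [← h, seg_getD hi]
    · intro h
      refine List.ext_getElem (by simp) fun i h1 h2 => ?_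
      have hi : i < σ.length := h2
      have := h i hi
      rw [← List.getD_eq_getElem σ false h2, ← this]
      simp [seg]
  rw [this]
  exact MeasurableSet.biInter (Finset.range σ.length).countable_toSet fun i _ =>
    (measurable_pi_apply i) (measurableSet_singleton _)

lemma generateFrom_cyl :
    (inferInstance : MeasurableSpace (ℕ → Bool)) = .generateFrom (Set.range cyl) := by
  apply le_antisymm
  · have : (inferInstance : MeasurableSpace (ℕ → Bool)) = MeasurableSpace.pi := rfl
    rw [this, MeasurableSpace.pi]
    apply iSup_le
    intro i
    rw [← measurable_iff_comap_le]
    intro s _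
    have hsing : ∀ b : Bool, MeasurableSet[MeasurableSpace.generateFrom (Set.range cyl)]
        ((fun X : ℕ → Bool => X i) ⁻¹' {b}) := by
      intro b
      have : (fun X : ℕ → Bool => X i) ⁻¹' {b} =
          ⋃ σ : {σ : List Bool // σ.length = i + 1 ∧ σ.getD i false = b}, cyl σ.1 := by
        ext X
        simp only [Set.mem_preimage, Set.mem_singleton_iff, Set.mem_iUnion]
        constructor
        · intro h
          refine ⟨⟨seg X (i + 1), by simp, ?_⟩, ?_⟩
          · rw [seg_getD (Nat.lt_succ_self i), h]
          · show seg X (seg X (i + 1)).length = seg X (i + 1)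
            rw [seg_length]
        · rintro ⟨⟨σ, hlen, hget⟩, hX⟩
          have hX' : seg X σ.length = σ := hX
          rw [← hget, ← hX', hlen, seg_getD (Nat.lt_succ_self i)]
      rw [this]
      exact MeasurableSet.iUnion fun σ =>
        MeasurableSpace.measurableSet_generateFrom ⟨σ.1, rfl⟩
    have hsu : (fun X : ℕ → Bool => X i) ⁻¹' s = ⋃ b ∈ s, (fun X : ℕ → Bool => X i) ⁻¹' {b} := by
      ext X; simp
    rw [hsu]
    exact MeasurableSet.biUnion s.to_countable fun b _ => hsing b
  · rw [MeasurableSpace.generateFrom_le_iff]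
    rintro s ⟨σ, rfl⟩
    exact measurableSet_cyl σ

lemma isPiSystem_cyl : IsPiSystem (Set.range cyl) := by
  rintro _ ⟨σ, rfl⟩ _ ⟨τ, rfl⟩ ⟨X, hXσ, hXτ⟩
  rcases comparable_of_mem hXσ hXτ with h | h
  · exact ⟨τ, (Set.inter_eq_self_of_subset_right (cyl_mono h)).symm⟩
  · exact ⟨σ, (Set.inter_eq_self_of_subset_left (cyl_mono h)).symm⟩

section Measure

variable {lam : Measure (ℕ → Bool)} [IsProbabilityMeasure lam]

lemma shift (hlam : ∀ σ : List Bool, lam (cyl σ) = (1 / 2 : ENNReal) ^ σ.length)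
    (σ : List Bool) :
    Measure.map (drp σ.length) (lam.restrict (cyl σ)) = ((1 / 2 : ENNReal) ^ σ.length) • lam := by
  refine ext_of_generate_finite (Set.range cyl) generateFrom_cyl isPiSystem_cyl ?_ ?_
  · rintro s ⟨τ, rfl⟩
    rw [Measure.map_apply (measurable_drp _) (measurableSet_cyl τ),
      Measure.restrict_apply ((measurable_drp _) (measurableSet_cyl τ)),
      Set.inter_comm, ← cyl_append, hlam, Measure.smul_apply, smul_eq_mul, hlam,
      List.length_append, pow_add]
  · rw [Measure.map_apply (measurable_drp _) MeasurableSet.univ, Set.preimage_univ,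
      Measure.restrict_apply MeasurableSet.univ, Set.univ_inter, hlam,
      Measure.smul_apply, smul_eq_mul, measure_univ, mul_one]

lemma shift_apply (hlam : ∀ σ : List Bool, lam (cyl σ) = (1 / 2 : ENNReal) ^ σ.length)
    (σ : List Bool) {T : Set (ℕ → Bool)} (hT : MeasurableSet T) :
    lam (cyl σ ∩ drp σ.length ⁻¹' T) = (1 / 2 : ENNReal) ^ σ.length * lam T := by
  have h1 : Measure.map (drp σ.length) (lam.restrict (cyl σ)) T
      = ((1 / 2 : ENNReal) ^ σ.length) * lam T := by
    rw [shift hlam σ, Measure.smul_apply, smul_eq_mul]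
  rw [Measure.map_apply (measurable_drp _) hT,
    Measure.restrict_apply ((measurable_drp _) hT), Set.inter_comm] at h1
  exact h1

end Measure

section Parse

variable (D : Set (List Bool))

def G : Set (ℕ → Bool) := {X | ∃ σ ∈ D, X ∈ cyl σ}

open Classical in
noncomputable def fl (X : ℕ → Bool) : ℕ :=
  if h : ∃ σ ∈ D, X ∈ cyl σ then h.choose.length else 1

noncomputable def Sp : ℕ → (ℕ → Bool) → ℕ
  | 0, _ => 0
  | k + 1, X => Sp k X + fl D (drp (Sp k X) X)

noncomputable def Lb (k : ℕ) (X : ℕ → Bool) : ℕ := fl D (drp (Sp D k X) X)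

variable {D}

lemma fl_eq (hpf : PrefixFree D) {X : ℕ → Bool} {σ : List Bool}
    (hσ : σ ∈ D) (hX : X ∈ cyl σ) : fl D X = σ.length := by
  classical
  have hex : ∃ σ ∈ D, X ∈ cyl σ := ⟨σ, hσ, hX⟩
  rw [fl, dif_pos hex]
  obtain ⟨hτD, hτX⟩ := hex.choose_spec
  rcases comparable_of_mem hτX hX with h | h
  · rw [hpf _ hτD _ hσ h]
  · rw [hpf _ hσ _ hτD h]

lemma fl_spec {X : ℕ → Bool} (hX : X ∈ G D) :
    ∃ σ ∈ D, X ∈ cyl σ ∧ σ.length = fl D X := by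
  classical
  have hex : ∃ σ ∈ D, X ∈ cyl σ := hX
  exact ⟨hex.choose, hex.choose_spec.1, hex.choose_spec.2, by rw [fl, dif_pos hex]⟩

lemma one_le_fl (hne : ∀ σ ∈ D, σ ≠ ([] : List Bool)) (X : ℕ → Bool) : 1 ≤ fl D X := by
  classical
  rw [fl]
  split
  · next h => exact List.length_pos_iff.mpr (hne _ h.choose_spec.1)
  · exact le_refl 1

@[simp] lemma Sp_zero (X : ℕ → Bool) : Sp D 0 X = 0 := rfl

@[simp] lemma Lb_zero (X : ℕ → Bool) : Lb D 0 X = fl D X := by simp [Lb]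

lemma Sp_succ (k : ℕ) (X : ℕ → Bool) : Sp D (k + 1) X = Sp D k X + Lb D k X := rfl

lemma Sp_succ_eq (k : ℕ) (X : ℕ → Bool) :
    Sp D (k + 1) X = fl D X + Sp D k (drp (fl D X) X) := by
  induction k generalizing X with
  | zero => simp [Sp_succ]
  | succ k ih =>
    have hd : drp (Sp D (k+1) X) X = drp (Sp D k (drp (fl D X) X)) (drp (fl D X) X) := by
      rw [ih, ← drp_drp]
    rw [Sp_succ (k+1) X, Lb, hd, ih, Sp_succ k, Lb, Nat.add_assoc]

lemma drp_Sp_succ (k : ℕ) (X : ℕ → Bool) :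
    drp (Sp D (k + 1) X) X = drp (Sp D k (drp (fl D X) X)) (drp (fl D X) X) := by
  rw [drp_drp, ← Sp_succ_eq]

lemma Lb_succ (k : ℕ) (X : ℕ → Bool) : Lb D (k + 1) X = Lb D k (drp (fl D X) X) := by
  rw [Lb, Lb, drp_Sp_succ]

lemma Sp_eq_sum (k : ℕ) (X : ℕ → Bool) : Sp D k X = ∑ i ∈ Finset.range k, Lb D i X := by
  induction k with
  | zero => simp
  | succ k ih => rw [Finset.sum_range_succ, ← ih, Sp_succ]

def HG (X : ℕ → Bool) : Prop := ∀ k, drp (Sp D k X) X ∈ G D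

lemma HG_zero {X : ℕ → Bool} (h : HG (D := D) X) : X ∈ G D := by
  have := h 0
  simpa using this

lemma HG_shift {X : ℕ → Bool} (h : HG (D := D) X) : HG (D := D) (drp (fl D X) X) := by
  intro k
  rw [← drp_Sp_succ]
  exact h (k + 1)

lemma block_mem {X : ℕ → Bool} (h : HG (D := D) X) (k : ℕ) :
    seg (drp (Sp D k X) X) (Lb D k X) ∈ D ∧
      drp (Sp D k X) X ∈ cyl (seg (drp (Sp D k X) X) (Lb D k X)) := by
  obtain ⟨σ, hσD, hσX, hσl⟩ := fl_spec (h k)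
  have : seg (drp (Sp D k X) X) (Lb D k X) = σ := by
    rw [Lb, ← hσl]
    exact hσX
  rw [this]
  exact ⟨hσD, hσX⟩

lemma flatten_blocks {X : ℕ → Bool} (h : HG (D := D) X) (k : ℕ) :
    seg X (Sp D k X) =
      (List.ofFn (fun i : Fin k => seg (drp (Sp D i X) X) (Lb D i X))).flatten := by
  induction k generalizing X with
  | zero => simp
  | succ k ih =>
    rw [List.ofFn_succ, List.flatten_cons]
    have h0 : seg (drp (Sp D ((0 : Fin (k+1)) : ℕ) X) X) (Lb D ((0 : Fin (k+1)) : ℕ) X)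
        = seg X (fl D X) := by
      show seg (drp (Sp D 0 X) X) (Lb D 0 X) = _
      simp
    have htail : (List.ofFn fun i : Fin k =>
        seg (drp (Sp D ((i.succ : Fin (k+1)) : ℕ) X) X) (Lb D ((i.succ : Fin (k+1)) : ℕ) X))
        = List.ofFn fun i : Fin k =>
          seg (drp (Sp D i (drp (fl D X) X)) (drp (fl D X) X)) (Lb D i (drp (fl D X) X)) := by
      refine congrArg _ (funext fun i => ?_)
      show seg (drp (Sp D ((i : ℕ) + 1) X) X) (Lb D ((i : ℕ) + 1) X) = _
      rw [drp_Sp_succ, Lb_succ]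
    rw [h0, htail, ← ih (HG_shift h), Sp_succ_eq, seg_append]

lemma parse_unique (hpf : PrefixFree D) :
    ∀ (k : ℕ) {X : ℕ → Bool}, HG (D := D) X → ∀ (B : Fin k → List Bool),
      (∀ i, B i ∈ D) → ∀ n, (List.ofFn B).flatten <+: seg X n →
      (List.ofFn B).flatten = seg X (Sp D k X) := by
  intro k
  induction k with
  | zero => intro X _ B _ n _; simp
  | succ k ih =>
    intro X hX B hB n hpre
    rw [List.ofFn_succ, List.flatten_cons] at hpre ⊢
    have hB0 : B 0 <+: seg X n := (List.prefix_append _ _).trans hpre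
    obtain ⟨hlen, hseg⟩ := prefix_seg_iff.mp hB0
    have hfl : fl D X = (B 0).length := fl_eq hpf (hB 0) hseg
    have hsplit : seg X n = B 0 ++ seg (drp (fl D X) X) (n - (B 0).length) := by
      conv_lhs => rw [show n = (B 0).length + (n - (B 0).length) from
        (Nat.add_sub_cancel' hlen).symm]
      rw [seg_append, hseg, hfl]
    rw [hsplit] at hpre
    have htail : (List.ofFn fun i : Fin k => B i.succ).flatten
        <+: seg (drp (fl D X) X) (n - (B 0).length) :=
      (List.prefix_append_right_inj (B 0)).mp hpre
    have hrec := ih (HG_shift hX) (fun i => B i.succ) (fun i => hB i.succ) _ htail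
    rw [hrec, Sp_succ_eq, seg_append, hfl, hseg]

lemma cat_iff (hpf : PrefixFree D) {X : ℕ → Bool} (h : HG (D := D) X) (k n : ℕ) :
    CatPrefix D k (seg X n) ↔ Sp D k X ≤ n := by
  constructor
  · rintro ⟨B, hB, hpre⟩
    have heq := parse_unique hpf k h B hB n hpre
    have h1 : (List.ofFn B).flatten.length ≤ n := by simpa using hpre.length_le
    rw [heq, seg_length] at h1
    exact h1
  · intro hle
    exact ⟨fun i => seg (drp (Sp D i X) X) (Lb D i X), fun i => (block_mem h i).1,
      by rw [← flatten_blocks h]; exact seg_prefix_seg hle⟩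

end Parse

section Meas

variable {D : Set (List Bool)}

lemma measurable_comp_nat {α β : Type*} [MeasurableSpace α] [MeasurableSpace β]
    {g : α → ℕ} (hg : Measurable g) {f : ℕ → α → β} (hf : ∀ n, Measurable (f n)) :
    Measurable fun x => f (g x) x := by
  intro t ht
  have : (fun x => f (g x) x) ⁻¹' t = ⋃ n, g ⁻¹' {n} ∩ f n ⁻¹' t := by
    ext x
    simp only [Set.mem_preimage, Set.mem_iUnion, Set.mem_inter_iff, Set.mem_singleton_iff]
    exact ⟨fun h => ⟨g x, rfl, h⟩, fun ⟨n, h1, h2⟩ => by rw [← h1] at h2; exact h2⟩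
  rw [this]
  exact MeasurableSet.iUnion fun n => (hg (measurableSet_singleton n)).inter (hf n ht)

lemma G_eq_iUnion : G D = ⋃ σ : D, cyl σ := by
  ext X
  simp only [G, Set.mem_setOf_eq, Set.mem_iUnion, Subtype.exists, exists_prop]

lemma measurableSet_G : MeasurableSet (G D) := by
  rw [G_eq_iUnion]
  exact MeasurableSet.iUnion fun σ => measurableSet_cyl σ

lemma measurable_fl (hpf : PrefixFree D) : Measurable (fl D) := by
  apply measurable_to_countable'
  intro a
  by_cases ha : a = 1
  · subst ha
    have : fl D ⁻¹' {1} = (G D)ᶜ ∪ ⋃ σ : {σ : D // (σ : List Bool).length = 1}, cyl σ.1 := by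
      ext X
      simp only [Set.mem_preimage, Set.mem_singleton_iff, Set.mem_union, Set.mem_compl_iff,
        Set.mem_iUnion]
      constructor
      · intro h
        by_cases hX : X ∈ G D
        · obtain ⟨σ, hσD, hσX, hσl⟩ := fl_spec hX
          exact Or.inr ⟨⟨⟨σ, hσD⟩, by rw [hσl, h]⟩, hσX⟩
        · exact Or.inl hX
      · rintro (h | ⟨⟨⟨σ, hσD⟩, hσl⟩, hX⟩)
        · classical
          rw [fl, dif_neg]
          exact h
        · rw [fl_eq hpf hσD hX]
          exact hσl
    rw [this]
    exact (measurableSet_G.compl).union (MeasurableSet.iUnion fun σ => measurableSet_cyl _)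
  · have : fl D ⁻¹' {a} = ⋃ σ : {σ : D // (σ : List Bool).length = a}, cyl σ.1 := by
      ext X
      simp only [Set.mem_preimage, Set.mem_singleton_iff, Set.mem_iUnion]
      constructor
      · intro h
        by_cases hX : X ∈ G D
        · obtain ⟨σ, hσD, hσX, hσl⟩ := fl_spec hX
          exact ⟨⟨⟨σ, hσD⟩, by rw [hσl, h]⟩, hσX⟩
        · exfalso
          apply ha
          classical
          have hX' : ¬ ∃ σ ∈ D, X ∈ cyl σ := hX
          rw [fl, dif_neg hX'] at h
          omega
      · rintro ⟨⟨⟨σ, hσD⟩, hσl⟩, hX⟩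
        rw [fl_eq hpf hσD hX]
        exact hσl
    rw [this]
    exact MeasurableSet.iUnion fun σ => measurableSet_cyl _

lemma measurable_Sp (hpf : PrefixFree D) (k : ℕ) : Measurable (Sp D k) := by
  induction k with
  | zero => exact measurable_const
  | succ k ih =>
    exact ih.add (measurable_comp_nat ih fun n => (measurable_fl hpf).comp (measurable_drp n))

lemma measurable_Lb (hpf : PrefixFree D) (k : ℕ) : Measurable (Lb D k) :=
  measurable_comp_nat (measurable_Sp hpf k) fun n =>
    (measurable_fl hpf).comp (measurable_drp n)

end Meas

section MeasComp

variable {D : Set (List Bool)} {lam : Measure (ℕ → Bool)} [IsProbabilityMeasure lam]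

open Classical in
noncomputable def q (D : Set (List Bool)) (A : Set ℕ) : ENNReal :=
  ∑' σ : D, if (σ : List Bool).length ∈ A then (1 / 2 : ENNReal) ^ (σ : List Bool).length else 0

lemma tsum_ennreal_half (hne : ∀ σ ∈ D, σ ≠ ([] : List Bool))
    (hsum : ∑' σ : D, ((1 : ℝ) / 2) ^ (σ : List Bool).length = 1)
    (hfin : Summable (fun σ : D =>
      ((σ : List Bool).length : ℝ) * ((1 : ℝ) / 2) ^ (σ : List Bool).length)) :
    ∑' σ : D, (1 / 2 : ENNReal) ^ (σ : List Bool).length = 1 := by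
  have hsum' : Summable (fun σ : D => ((1 : ℝ) / 2) ^ (σ : List Bool).length) := by
    refine Summable.of_nonneg_of_le (fun σ => by positivity) (fun σ => ?_) hfin
    have h1 : (1 : ℝ) ≤ ((σ : List Bool).length : ℕ) := by
      have := List.length_pos_iff.mpr (hne _ σ.2)
      exact_mod_cast this
    nlinarith [pow_nonneg (by norm_num : (0:ℝ) ≤ 1/2) (σ : List Bool).length]
  have key : ∀ n : ℕ, (1 / 2 : ENNReal) ^ n = ENNReal.ofReal (((1 : ℝ) / 2) ^ n) := by
    intro n
    rw [ENNReal.ofReal_pow (by norm_num)]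
    norm_num [ENNReal.ofReal_div_of_pos]
  calc ∑' σ : D, (1 / 2 : ENNReal) ^ (σ : List Bool).length
      = ∑' σ : D, ENNReal.ofReal (((1 : ℝ) / 2) ^ (σ : List Bool).length) :=
        tsum_congr fun σ => key _
    _ = ENNReal.ofReal (∑' σ : D, ((1 : ℝ) / 2) ^ (σ : List Bool).length) :=
        (ENNReal.ofReal_tsum_of_nonneg (fun σ => by positivity) hsum').symm
    _ = 1 := by rw [hsum, ENNReal.ofReal_one]

lemma disjoint_cyl_of_ne (hpf : PrefixFree D) {σ τ : D} (h : σ ≠ τ) :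
    Disjoint (cyl σ.1) (cyl τ.1) := by
  rw [Set.disjoint_left]
  intro X hXσ hXτ
  apply h
  apply Subtype.ext
  rcases comparable_of_mem hXσ hXτ with hc | hc
  · exact hpf _ σ.2 _ τ.2 hc
  · exact (hpf _ τ.2 _ σ.2 hc).symm

lemma lam_G (hpf : PrefixFree D)
    (hlam : ∀ σ : List Bool, lam (cyl σ) = (1 / 2 : ENNReal) ^ σ.length)
    (h1 : ∑' σ : D, (1 / 2 : ENNReal) ^ (σ : List Bool).length = 1) :
    lam (G D) = 1 := by
  rw [G_eq_iUnion, measure_iUnion (fun σ τ h => disjoint_cyl_of_ne hpf h)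
    (fun σ => measurableSet_cyl _)]
  rw [← h1]
  exact tsum_congr fun σ => hlam _

lemma q_univ (h1 : ∑' σ : D, (1 / 2 : ENNReal) ^ (σ : List Bool).length = 1) :
    q D Set.univ = 1 := by
  rw [q]
  simp only [Set.mem_univ, if_true]
  exact h1

lemma lam_Gc (hG : lam (G D) = 1) : lam (G D)ᶜ = 0 := by
  rw [measure_compl measurableSet_G (measure_ne_top _ _), hG, measure_univ, tsub_self]

lemma measurableSet_tail (hpf : PrefixFree D) (k : ℕ) (A : ℕ → Set ℕ) :
    MeasurableSet {X : ℕ → Bool | ∀ i < k, Lb D i X ∈ A i} := by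
  have : {X : ℕ → Bool | ∀ i < k, Lb D i X ∈ A i}
      = ⋂ i, ⋂ (_ : i < k), Lb D i ⁻¹' A i := by
    ext X; simp
  rw [this]
  exact MeasurableSet.iInter fun i => MeasurableSet.iInter fun _ =>
    measurable_Lb hpf i MeasurableSpace.measurableSet_top

lemma joint (hpf : PrefixFree D)
    (hlam : ∀ σ : List Bool, lam (cyl σ) = (1 / 2 : ENNReal) ^ σ.length)
    (hG : lam (G D) = 1) (k : ℕ) (A : ℕ → Set ℕ) :
    lam {X : ℕ → Bool | ∀ i < k, Lb D i X ∈ A i} = ∏ i ∈ Finset.range k, q D (A i) := by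
  classical
  induction k generalizing A with
  | zero => simp
  | succ k ih =>
    have hT := measurableSet_tail hpf k (fun i => A (i + 1))
    have hdecomp : {X : ℕ → Bool | ∀ i < k + 1, Lb D i X ∈ A i} ∩ G D
        = ⋃ σ : D, (if (σ : List Bool).length ∈ A 0 then
            cyl σ.1 ∩ drp (σ : List Bool).length ⁻¹'
              {X : ℕ → Bool | ∀ i < k, Lb D i X ∈ A (i + 1)} else ∅) := by
      ext X
      constructor
      · rintro ⟨hE, hXG⟩
        obtain ⟨σ, hσD, hσX, hσl⟩ := fl_spec hXG
        refine Set.mem_iUnion.mpr ⟨⟨σ, hσD⟩, ?_⟩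
        rw [if_pos (by rw [hσl]; simpa using hE 0 (Nat.succ_pos k))]
        refine ⟨hσX, fun i hi => ?_⟩
        show Lb D i (drp σ.length X) ∈ A (i + 1)
        rw [hσl, ← Lb_succ]
        exact hE (i + 1) (Nat.succ_lt_succ hi)
      · intro hX
        obtain ⟨σ, hXU⟩ := Set.mem_iUnion.mp hX
        split_ifs at hXU with hP
        · obtain ⟨hXσ, hXT⟩ := hXU
          have hfl : fl D X = (σ : List Bool).length := fl_eq hpf σ.2 hXσ
          refine ⟨fun i hi => ?_, ⟨σ, σ.2, hXσ⟩⟩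
          match i with
          | 0 => rw [Lb_zero, hfl]; exact hP
          | (i + 1) =>
            rw [Lb_succ, hfl]
            exact hXT i (Nat.lt_of_succ_lt_succ hi)
        · exact absurd hXU (Set.notMem_empty X)
    calc lam {X : ℕ → Bool | ∀ i < k + 1, Lb D i X ∈ A i}
        = lam ({X : ℕ → Bool | ∀ i < k + 1, Lb D i X ∈ A i} ∩ G D) :=
          (measure_inter_conull (lam_Gc hG)).symm
      _ = ∑' σ : D, lam (if (σ : List Bool).length ∈ A 0 then
            cyl σ.1 ∩ drp (σ : List Bool).length ⁻¹'
              {X : ℕ → Bool | ∀ i < k, Lb D i X ∈ A (i + 1)} else ∅) := by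
          rw [hdecomp]
          refine measure_iUnion (fun σ τ h => ?_) (fun σ => ?_)
          · refine Disjoint.mono ?_ ?_ (disjoint_cyl_of_ne hpf h) <;>
              · dsimp only
                split_ifs
                · exact Set.inter_subset_left
                · exact Set.empty_subset _
          · split_ifs
            · exact (measurableSet_cyl _).inter ((measurable_drp _) hT)
            · exact MeasurableSet.empty
      _ = ∑' σ : D, (if (σ : List Bool).length ∈ A 0 then
            (1 / 2 : ENNReal) ^ (σ : List Bool).length else 0)
            * lam {X : ℕ → Bool | ∀ i < k, Lb D i X ∈ A (i + 1)} := by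
          refine tsum_congr fun σ => ?_
          split_ifs with hP
          · exact shift_apply hlam σ.1 hT
          · simp
      _ = q D (A 0) * lam {X : ℕ → Bool | ∀ i < k, Lb D i X ∈ A (i + 1)} := by
          rw [ENNReal.tsum_mul_right, q]
      _ = ∏ i ∈ Finset.range (k + 1), q D (A i) := by
          rw [ih, Finset.prod_range_succ', mul_comm]

lemma marginal (hpf : PrefixFree D)
    (hlam : ∀ σ : List Bool, lam (cyl σ) = (1 / 2 : ENNReal) ^ σ.length)
    (hG : lam (G D) = 1)
    (h1 : ∑' σ : D, (1 / 2 : ENNReal) ^ (σ : List Bool).length = 1)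
    (i : ℕ) (A : Set ℕ) : lam (Lb D i ⁻¹' A) = q D A := by
  classical
  have := joint hpf hlam hG (i + 1) (fun j => if j = i then A else Set.univ)
  have hev : {X : ℕ → Bool | ∀ j < i + 1, Lb D j X ∈ (if j = i then A else Set.univ)}
      = Lb D i ⁻¹' A := by
    ext X
    simp only [Set.mem_setOf_eq, Set.mem_preimage]
    constructor
    · intro h
      have := h i (Nat.lt_succ_self i)
      simpa using this
    · intro h j hj
      by_cases hji : j = i
      · subst hji; simpa using h
      · simp [hji]
  rw [hev] at this
  rw [this]
  have : ∀ j, q D (if j = i then A else Set.univ) = if j = i then q D A else 1 := by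
    intro j
    split_ifs <;> simp [q_univ h1]
  calc ∏ j ∈ Finset.range (i + 1), q D (if j = i then A else Set.univ)
      = ∏ j ∈ Finset.range (i + 1), if j = i then q D A else 1 :=
        Finset.prod_congr rfl fun j _ => this j
    _ = q D A := by
        rw [Finset.prod_ite_eq', if_pos (Finset.self_mem_range_succ i)]

end MeasComp

section MeasComp2

variable {D : Set (List Bool)} {lam : Measure (ℕ → Bool)} [IsProbabilityMeasure lam]

lemma pair (hpf : PrefixFree D)
    (hlam : ∀ σ : List Bool, lam (cyl σ) = (1 / 2 : ENNReal) ^ σ.length)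
    (hG : lam (G D) = 1)
    (h1 : ∑' σ : D, (1 / 2 : ENNReal) ^ (σ : List Bool).length = 1)
    {i j : ℕ} (hij : i ≠ j) (A B : Set ℕ) :
    lam (Lb D i ⁻¹' A ∩ Lb D j ⁻¹' B) = q D A * q D B := by
  classical
  set k := max i j + 1 with hk
  set As : ℕ → Set ℕ := fun l => if l = i then A else if l = j then B else Set.univ with hAs
  have := joint hpf hlam hG k As
  have hev : {X : ℕ → Bool | ∀ l < k, Lb D l X ∈ As l} = Lb D i ⁻¹' A ∩ Lb D j ⁻¹' B := by
    ext X
    simp only [Set.mem_setOf_eq, Set.mem_inter_iff, Set.mem_preimage]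
    constructor
    · intro h
      refine ⟨?_, ?_⟩
      · have hi := h i (by omega)
        simpa [hAs] using hi
      · have hj := h j (by omega)
        simpa [hAs, Ne.symm hij] using hj
    · rintro ⟨hA, hB⟩ l hl
      rw [hAs]
      dsimp only
      split_ifs with h1' h2'
      · rw [h1']; exact hA
      · rw [h2']; exact hB
      · trivial
  rw [hev] at this
  rw [this]
  have hqs : ∀ l, q D (As l) = (if l = i then q D A else 1) * (if l = j then q D B else 1) := by
    intro l
    rw [hAs]
    dsimp only
    split_ifs with h1' h2'
    · omega
    · rw [mul_one]
    · rw [one_mul]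
    · rw [mul_one, q_univ h1]
  calc ∏ l ∈ Finset.range k, q D (As l)
      = ∏ l ∈ Finset.range k, (if l = i then q D A else 1) * (if l = j then q D B else 1) :=
        Finset.prod_congr rfl fun l _ => hqs l
    _ = q D A * q D B := by
        rw [Finset.prod_mul_distrib, Finset.prod_ite_eq', Finset.prod_ite_eq',
          if_pos (Finset.mem_range.mpr (by omega)), if_pos (Finset.mem_range.mpr (by omega))]

lemma indep_Lb (hpf : PrefixFree D)
    (hlam : ∀ σ : List Bool, lam (cyl σ) = (1 / 2 : ENNReal) ^ σ.length)
    (hG : lam (G D) = 1)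
    (h1 : ∑' σ : D, (1 / 2 : ENNReal) ^ (σ : List Bool).length = 1)
    {i j : ℕ} (hij : i ≠ j) :
    ProbabilityTheory.IndepFun (Lb D i) (Lb D j) lam := by
  rw [ProbabilityTheory.indepFun_iff_measure_inter_preimage_eq_mul]
  intro A B _ _
  rw [pair hpf hlam hG h1 hij A B, marginal hpf hlam hG h1, marginal hpf hlam hG h1]

lemma identDistrib_Lb (hpf : PrefixFree D)
    (hlam : ∀ σ : List Bool, lam (cyl σ) = (1 / 2 : ENNReal) ^ σ.length)
    (hG : lam (G D) = 1)
    (h1 : ∑' σ : D, (1 / 2 : ENNReal) ^ (σ : List Bool).length = 1) (i : ℕ) :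
    ProbabilityTheory.IdentDistrib (Lb D i) (Lb D 0) lam lam := by
  refine ⟨(measurable_Lb hpf i).aemeasurable, (measurable_Lb hpf 0).aemeasurable, ?_⟩
  refine Measure.ext fun s hs => ?_
  rw [Measure.map_apply (measurable_Lb hpf i) hs, Measure.map_apply (measurable_Lb hpf 0) hs,
    marginal hpf hlam hG h1, marginal hpf hlam hG h1]

lemma lintegral_Lb (hpf : PrefixFree D)
    (hlam : ∀ σ : List Bool, lam (cyl σ) = (1 / 2 : ENNReal) ^ σ.length)
    (hG : lam (G D) = 1)
    (h1 : ∑' σ : D, (1 / 2 : ENNReal) ^ (σ : List Bool).length = 1) :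
    ∫⁻ X, (Lb D 0 X : ENNReal) ∂lam
      = ∑' σ : D, ((σ : List Bool).length : ENNReal) * (1 / 2 : ENNReal) ^ (σ : List Bool).length := by
  classical
  rw [← lintegral_map (measurable_from_top) (measurable_Lb hpf 0), lintegral_countable']
  have hsing : ∀ n : ℕ, (lam.map (Lb D 0)) {n} = q D {n} := fun n => by
    rw [Measure.map_apply (measurable_Lb hpf 0) (measurableSet_singleton n),
      marginal hpf hlam hG h1]
  calc ∑' n : ℕ, (n : ENNReal) * (lam.map (Lb D 0)) {n}
      = ∑' n : ℕ, ∑' σ : D, (if (σ : List Bool).length ∈ ({n} : Set ℕ) then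
          (n : ENNReal) * (1 / 2 : ENNReal) ^ (σ : List Bool).length else 0) := by
        refine tsum_congr fun n => ?_
        rw [hsing n, q, ← ENNReal.tsum_mul_left]
        refine tsum_congr fun σ => ?_
        split_ifs <;> simp
    _ = ∑' σ : D, ∑' n : ℕ, (if (σ : List Bool).length ∈ ({n} : Set ℕ) then
          (n : ENNReal) * (1 / 2 : ENNReal) ^ (σ : List Bool).length else 0) :=
        ENNReal.tsum_comm
    _ = ∑' σ : D, ((σ : List Bool).length : ENNReal) * (1 / 2 : ENNReal) ^ (σ : List Bool).length := by
        refine tsum_congr fun σ => ?_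
        rw [tsum_eq_single ((σ : List Bool).length : ℕ) ?_]
        · simp
        · intro n hn
          rw [if_neg]
          simp only [Set.mem_singleton_iff]
          omega

lemma lam_bad (hpf : PrefixFree D)
    (hlam : ∀ σ : List Bool, lam (cyl σ) = (1 / 2 : ENNReal) ^ σ.length)
    (hG : lam (G D) = 1) (k : ℕ) :
    lam {X : ℕ → Bool | drp (Sp D k X) X ∉ G D} = 0 := by
  induction k with
  | zero =>
    have : {X : ℕ → Bool | drp (Sp D 0 X) X ∉ G D} = (G D)ᶜ := by
      ext X
      simp
    rw [this]
    exact lam_Gc hG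
  | succ k ih =>
    have hmeas : MeasurableSet {X : ℕ → Bool | drp (Sp D k X) X ∉ G D} := by
      have : {X : ℕ → Bool | drp (Sp D k X) X ∉ G D}
          = (fun X => drp (Sp D k X) X) ⁻¹' (G D)ᶜ := rfl
      rw [this]
      exact (measurable_comp_nat (measurable_Sp hpf k) measurable_drp) measurableSet_G.compl
    have hsub : {X : ℕ → Bool | drp (Sp D (k + 1) X) X ∉ G D}
        ⊆ (G D)ᶜ ∪ ⋃ σ : D, (cyl σ.1 ∩ drp (σ : List Bool).length ⁻¹'
            {X : ℕ → Bool | drp (Sp D k X) X ∉ G D}) := by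
      intro X hX
      by_cases hXG : X ∈ G D
      · right
        obtain ⟨σ, hσD, hσX, hσl⟩ := fl_spec hXG
        refine Set.mem_iUnion.mpr ⟨⟨σ, hσD⟩, hσX, ?_⟩
        show drp (Sp D k (drp σ.length X)) (drp σ.length X) ∉ G D
        rw [hσl, ← drp_Sp_succ]
        exact hX
      · exact Or.inl hXG
    refine le_antisymm ?_ zero_le
    calc lam {X : ℕ → Bool | drp (Sp D (k + 1) X) X ∉ G D}
        ≤ lam ((G D)ᶜ ∪ ⋃ σ : D, (cyl σ.1 ∩ drp (σ : List Bool).length ⁻¹'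
            {X : ℕ → Bool | drp (Sp D k X) X ∉ G D})) := measure_mono hsub
      _ ≤ lam (G D)ᶜ + lam (⋃ σ : D, (cyl σ.1 ∩ drp (σ : List Bool).length ⁻¹'
            {X : ℕ → Bool | drp (Sp D k X) X ∉ G D})) := measure_union_le _ _
      _ ≤ 0 + ∑' σ : D, lam (cyl σ.1 ∩ drp (σ : List Bool).length ⁻¹'
            {X : ℕ → Bool | drp (Sp D k X) X ∉ G D}) := by
          gcongr
          · exact le_of_eq (lam_Gc hG)
          · exact measure_iUnion_le _
      _ = 0 := by
          rw [zero_add]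
          have hz : ∀ σ : D, lam (cyl σ.1 ∩ drp (σ : List Bool).length ⁻¹'
              {X : ℕ → Bool | drp (Sp D k X) X ∉ G D}) = 0 := fun σ => by
            rw [shift_apply hlam σ.1 hmeas, ih, mul_zero]
          rw [tsum_congr hz, tsum_zero]

end MeasComp2

lemma renewal {S : ℕ → ℕ} {Nf : ℕ → ℕ} {m : ℝ} (hm : 0 < m)
    (hS : Tendsto (fun k : ℕ => (S k : ℝ) / (k : ℝ)) atTop (nhds m))
    (hmono : StrictMono S)
    (h1 : ∀ n, S (Nf n) ≤ n) (h2 : ∀ n, n < S (Nf n + 1)) :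
    Tendsto (fun n : ℕ => (Nf n : ℝ) / (n : ℝ)) atTop (nhds (1 / m)) := by
  have hNtop : Tendsto Nf atTop atTop := by
    rw [tendsto_atTop]
    intro b
    filter_upwards [eventually_ge_atTop (S b)] with n hn
    by_contra hb
    push_neg at hb
    have : S (Nf n + 1) ≤ S b := hmono.monotone (by omega)
    exact absurd (h2 n) (not_lt.mpr (this.trans hn))
  have hinv : Tendsto (fun k : ℕ => (k : ℝ) / (S k : ℝ)) atTop (nhds (1 / m)) := by
    have h := hS.inv₀ hm.ne'
    simp only [inv_div] at h
    rw [one_div]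
    exact h
  have hinv' : Tendsto (fun k : ℕ => (k : ℝ) / (S (k + 1) : ℝ)) atTop (nhds (1 / m)) := by
    have ha : Tendsto (fun k : ℕ => (k : ℝ) / ((k : ℝ) + 1)) atTop (nhds 1) :=
      tendsto_natCast_div_add_atTop 1
    have hb : Tendsto (fun k : ℕ => ((k + 1 : ℕ) : ℝ) / (S (k + 1) : ℝ)) atTop (nhds (1 / m)) :=
      hinv.comp (tendsto_add_atTop_nat 1)
    have hc := ha.mul hb
    rw [one_mul] at hc
    refine hc.congr fun k => ?_
    push_cast
    rw [div_mul_div_comm]  -- (k/(k+1)) * ((k+1)/S) = (k*(k+1))/((k+1)*S)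
    rw [mul_comm ((k : ℝ) + 1) (S (k + 1) : ℝ)]
    rw [mul_div_mul_right _ _ (by positivity : ((k : ℝ) + 1) ≠ 0)]
  have hup : Tendsto (fun n : ℕ => (Nf n : ℝ) / (S (Nf n) : ℝ)) atTop (nhds (1 / m)) :=
    hinv.comp hNtop
  have hlo : Tendsto (fun n : ℕ => (Nf n : ℝ) / (S (Nf n + 1) : ℝ)) atTop (nhds (1 / m)) :=
    hinv'.comp hNtop
  refine tendsto_of_tendsto_of_tendsto_of_le_of_le' hlo hup ?_ ?_
  · filter_upwards [eventually_gt_atTop 0] with n hn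
    have hn' : (0 : ℝ) < (n : ℝ) := by exact_mod_cast hn
    have h2' : (n : ℝ) < (S (Nf n + 1) : ℝ) := by exact_mod_cast h2 n
    gcongr
  · filter_upwards [hNtop.eventually (eventually_ge_atTop 1), eventually_gt_atTop 0]
      with n h1n hn
    have hS0 : 0 < S (Nf n) := Nat.lt_of_le_of_lt (Nat.zero_le (S 0)) (hmono (by omega))
    have hS0' : (0 : ℝ) < (S (Nf n) : ℝ) := by exact_mod_cast hS0
    have h1' : (S (Nf n) : ℝ) ≤ (n : ℝ) := by exact_mod_cast h1 n
    gcongr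

end S14

open S14

/-- Let `D` be a prefix-free set of nonempty strings with `Σ_{σ∈D} 2^{-|σ|} = 1`
and finite `AvgRT(D)`, and let `N σ` be the largest `k` such that some initial
segment of `σ` is a concatenation of `k` elements of `D`.  Then for `λ`-a.e.
`X ∈ 2^ω`, `N(X↾n)/n → 1/AvgRT(D)`. -/
theorem stmt14 (D : Set (List Bool))
    (hne : ∀ σ ∈ D, σ ≠ ([] : List Bool))
    (hpf : PrefixFree D)
    (hsum : ∑' σ : D, ((1 : ℝ) / 2) ^ (σ : List Bool).length = 1)
    (hfin : Summable (fun σ : D =>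
      ((σ : List Bool).length : ℝ) * ((1 : ℝ) / 2) ^ (σ : List Bool).length))
    (N : List Bool → ℕ)
    (hN : ∀ σ : List Bool, CatPrefix D (N σ) σ ∧ ∀ k, CatPrefix D k σ → k ≤ N σ)
    (lam : Measure (ℕ → Bool)) [IsProbabilityMeasure lam]
    (hlam : ∀ σ : List Bool, lam (cyl σ) = (1 / 2 : ENNReal) ^ σ.length) :
    ∀ᵐ X ∂lam,
      Tendsto (fun n : ℕ => ((N (seg X n) : ℝ)) / n) atTop
        (nhds (1 / AvgRT D)) := by
  have h1 : ∑' σ : D, (1 / 2 : ENNReal) ^ (σ : List Bool).length = 1 :=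
    tsum_ennreal_half hne hsum hfin
  have hG : lam (G D) = 1 := lam_G hpf hlam h1
  -- the mean
  have hkey : ∀ n : ℕ, (1 / 2 : ENNReal) ^ n = ENNReal.ofReal (((1 : ℝ) / 2) ^ n) := by
    intro n
    rw [ENNReal.ofReal_pow (by norm_num)]
    norm_num [ENNReal.ofReal_div_of_pos]
  have hAvg_nonneg : 0 ≤ AvgRT D := tsum_nonneg fun σ => by positivity
  have hsum' : Summable (fun σ : D => ((1 : ℝ) / 2) ^ (σ : List Bool).length) := by
    refine Summable.of_nonneg_of_le (fun σ => by positivity) (fun σ => ?_) hfin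
    have h1' : (1 : ℝ) ≤ ((σ : List Bool).length : ℕ) := by
      exact_mod_cast List.length_pos_iff.mpr (hne _ σ.2)
    nlinarith [pow_nonneg (by norm_num : (0:ℝ) ≤ 1/2) (σ : List Bool).length]
  have hm1 : 1 ≤ AvgRT D := by
    rw [← hsum]
    refine Summable.tsum_le_tsum (fun σ => ?_) hsum' hfin
    have h1' : (1 : ℝ) ≤ ((σ : List Bool).length : ℕ) := by
      exact_mod_cast List.length_pos_iff.mpr (hne _ σ.2)
    nlinarith [pow_nonneg (by norm_num : (0:ℝ) ≤ 1/2) (σ : List Bool).length]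
  have hm0 : 0 < AvgRT D := lt_of_lt_of_le one_pos hm1
  have hOfReal : ∑' σ : D, ((σ : List Bool).length : ENNReal)
      * (1 / 2 : ENNReal) ^ (σ : List Bool).length = ENNReal.ofReal (AvgRT D) := by
    rw [AvgRT, ENNReal.ofReal_tsum_of_nonneg (fun σ => by positivity) hfin]
    refine tsum_congr fun σ => ?_
    rw [ENNReal.ofReal_mul (by positivity), ENNReal.ofReal_natCast, hkey]
  have hlint : ∫⁻ X, ((Lb D 0 X : ℕ) : ENNReal) ∂lam = ENNReal.ofReal (AvgRT D) := by
    rw [lintegral_Lb hpf hlam hG h1, hOfReal]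
  have hmeaY : Measurable (fun X => ((Lb D 0 X : ℕ) : ℝ)) :=
    Measurable.comp measurable_from_top (measurable_Lb hpf 0)
  have hint : Integrable (fun X => ((Lb D 0 X : ℕ) : ℝ)) lam := by
    refine ⟨hmeaY.aestronglyMeasurable, ?_⟩
    rw [hasFiniteIntegral_iff_norm]
    have : ∀ X, ENNReal.ofReal ‖((Lb D 0 X : ℕ) : ℝ)‖ = ((Lb D 0 X : ℕ) : ENNReal) := by
      intro X
      rw [Real.norm_of_nonneg (Nat.cast_nonneg _), ENNReal.ofReal_natCast]
    calc ∫⁻ X, ENNReal.ofReal ‖((Lb D 0 X : ℕ) : ℝ)‖ ∂lam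
        = ∫⁻ X, ((Lb D 0 X : ℕ) : ENNReal) ∂lam := lintegral_congr fun X => this X
      _ = ENNReal.ofReal (AvgRT D) := hlint
      _ < ⊤ := ENNReal.ofReal_lt_top
  have hmean : ∫ X, ((Lb D 0 X : ℕ) : ℝ) ∂lam = AvgRT D := by
    rw [integral_eq_lintegral_of_nonneg_ae (Filter.Eventually.of_forall fun X => Nat.cast_nonneg _)
      hmeaY.aestronglyMeasurable]
    have : ∀ X, ENNReal.ofReal ((Lb D 0 X : ℕ) : ℝ) = ((Lb D 0 X : ℕ) : ENNReal) :=
      fun X => ENNReal.ofReal_natCast _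
    rw [lintegral_congr fun X => this X, hlint, ENNReal.toReal_ofReal hAvg_nonneg]
  -- strong law
  have hslln := ProbabilityTheory.strong_law_ae_real (μ := lam)
    (fun i X => ((Lb D i X : ℕ) : ℝ)) hint
    (fun i j hij => (indep_Lb hpf hlam hG h1 hij).comp measurable_from_top measurable_from_top)
    (fun i => (identDistrib_Lb hpf hlam hG h1 i).comp measurable_from_top)
  rw [hmean] at hslln
  -- a.e. the parse never fails
  have hae : ∀ᵐ X ∂lam, HG (D := D) X := by
    have : ∀ᵐ X ∂lam, ∀ k, drp (Sp D k X) X ∈ G D := by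
      rw [ae_all_iff]
      intro k
      rw [ae_iff]
      exact lam_bad hpf hlam hG k
    exact this
  filter_upwards [hslln, hae] with X hX hHG
  have hSconv : Tendsto (fun k : ℕ => (Sp D k X : ℝ) / (k : ℝ)) atTop (nhds (AvgRT D)) := by
    refine hX.congr fun k => ?_
    congr 1
    rw [Sp_eq_sum]
    push_cast
    rfl
  have hmono : StrictMono (fun k => Sp D k X) := by
    apply strictMono_nat_of_lt_succ
    intro k
    have := one_le_fl hne (drp (Sp D k X) X)
    rw [Sp_succ]
    have : 1 ≤ Lb D k X := this
    omega
  have h1n : ∀ n, Sp D (N (seg X n)) X ≤ n := fun n =>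
    (cat_iff hpf hHG _ n).mp (hN (seg X n)).1
  have h2n : ∀ n, n < Sp D (N (seg X n) + 1) X := by
    intro n
    by_contra hcon
    push_neg at hcon
    have hc := (cat_iff hpf hHG (N (seg X n) + 1) n).mpr hcon
    have := (hN (seg X n)).2 _ hc
    omega
  exact renewal hm0 hSconv hmono h1n h2n
end
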